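/- arXiv:1504.00769 — 3 statements merged into one kernel-verified Lean document; each statement's English description precedes it below -/
import Mathlib

section
/- For every integer r ≥ 3, if (a,b) ⊆ (0,1) is an open interval disjoint from Π_∞^(r) with b − a = r!/r^r, then a = 0 and b = r!/r^r; that is, (0, r!/r^r) is the only gap of maximal length r!/r^r for r-graphs. -/
open Filter Topology

/-- An `r`-graph: a finite vertex set (identified with `Fin n`) together with a set of
edges, each of which is an `r`-element subset of the vertex set. -/
structure RGraph (r : ℕ) where
  n : ℕ
  edges : Finset (Finset (Fin n))
  card_eq : ∀ e ∈ edges, e.card = r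

/-- `F` is a subgraph of `G`: there is an injection of the vertices of `F` into the
vertices of `G` carrying every edge of `F` to an edge of `G`. -/
def RGraph.IsSubgraph {r : ℕ} (F G : RGraph r) : Prop :=
  ∃ f : Fin F.n → Fin G.n, Function.Injective f ∧ ∀ e ∈ F.edges, e.image f ∈ G.edges

/-- `G` is `𝓕`-free: no member of `𝓕` is a subgraph of `G`. -/
def RGraph.Free {r : ℕ} (𝓕 : Set (RGraph r)) (G : RGraph r) : Prop :=
  ∀ F ∈ 𝓕, ¬ F.IsSubgraph G

/-- The Turán function `ex(n, 𝓕)`: the maximum number of edges in an `𝓕`-free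
`r`-graph on `n` vertices. -/
noncomputable def exNum (r : ℕ) (𝓕 : Set (RGraph r)) (n : ℕ) : ℕ :=
  sSup {k : ℕ | ∃ G : RGraph r, G.n = n ∧ RGraph.Free 𝓕 G ∧ G.edges.card = k}

/-- `Π_∞^(r)`: the set of Turán densities `π(𝓕) = lim_{n→∞} ex(n,𝓕)/C(n,r)` over all
(possibly infinite, possibly empty) families `𝓕` of `r`-graphs. -/
def turanDensities (r : ℕ) : Set ℝ :=
  {x : ℝ | ∃ 𝓕 : Set (RGraph r),
    Tendsto (fun n : ℕ => (exNum r 𝓕 n : ℝ) / (n.choose r : ℝ)) atTop (𝓝 x)}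

namespace TuranAux

open Finset

theorem isSubgraph_refl {r : ℕ} (G : RGraph r) : G.IsSubgraph G :=
  ⟨id, Function.injective_id, fun e he => by simpa using he⟩

theorem isSubgraph_trans {r : ℕ} {F G H : RGraph r} (h1 : F.IsSubgraph G)
    (h2 : G.IsSubgraph H) : F.IsSubgraph H := by
  obtain ⟨f, hf, hfe⟩ := h1
  obtain ⟨g, hg, hge⟩ := h2
  exact ⟨g ∘ f, hg.comp hf, fun e he => by
    rw [← Finset.image_image]; exact hge _ (hfe e he)⟩

section Pattern

variable (T : ℕ) (E : Finset (Finset (Fin T)))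

/-- The polynomial `∑_{e ∈ E} ∏_{v ∈ e} x v` associated to a pattern. -/
def LagF (x : Fin T → ℝ) : ℝ := ∑ e ∈ E, ∏ v ∈ e, x v

theorem lagF_continuous : Continuous (LagF T E) := by
  apply continuous_finset_sum
  intro e _
  exact continuous_finset_prod e (fun v _ => continuous_apply v)

theorem simplex_nonempty (hT : 0 < T) : (stdSimplex ℝ (Fin T)).Nonempty := by
  refine ⟨fun _ => (T : ℝ)⁻¹, fun _ => by positivity, ?_⟩
  have hT' : (T : ℝ) ≠ 0 := by positivity
  simp [Finset.sum_const, Finset.card_univ]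
  field_simp

/-- The Lagrangian of a pattern: max of `LagF` over the standard simplex. -/
noncomputable def lam : ℝ := sSup (LagF T E '' stdSimplex ℝ (Fin T))

theorem image_compact : IsCompact (LagF T E '' stdSimplex ℝ (Fin T)) :=
  (isCompact_stdSimplex _ _).image (lagF_continuous T E)

theorem exists_lam_eq (hT : 0 < T) :
    ∃ x ∈ stdSimplex ℝ (Fin T), LagF T E x = lam T E := by
  have h := (image_compact T E).sSup_mem ((simplex_nonempty T hT).image _)
  obtain ⟨x, hx, hx2⟩ := h
  exact ⟨x, hx, hx2⟩

theorem le_lam {x : Fin T → ℝ} (hx : x ∈ stdSimplex ℝ (Fin T)) :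
    LagF T E x ≤ lam T E :=
  le_csSup (image_compact T E).bddAbove ⟨x, hx, rfl⟩

theorem lam_nonneg (hT : 0 < T) : 0 ≤ lam T E := by
  obtain ⟨x, hx⟩ := simplex_nonempty T hT
  refine le_trans ?_ (le_lam T E hx)
  apply Finset.sum_nonneg
  intro e _
  exact Finset.prod_nonneg (fun v _ => hx.1 v)

theorem lam_empty (hT : 0 < T) : lam T (∅ : Finset (Finset (Fin T))) = 0 := by
  refine le_antisymm ?_ ?_
  · apply csSup_le ((simplex_nonempty T hT).image _)
    rintro y ⟨x, -, rfl⟩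
    simp [LagF]
  · exact lam_nonneg T ∅ hT

end Pattern

section Graphs

variable (r T : ℕ) (E : Finset (Finset (Fin T)))

/-- Blow-up graph: vertex set `Fin N`, classes given by `cl`, edges = `r`-sets whose
image under `cl` is an edge of the pattern. -/
def BU (N : ℕ) (cl : Fin N → Fin T) : RGraph r where
  n := N
  edges := Finset.univ.filter (fun A : Finset (Fin N) => A.card = r ∧ A.image cl ∈ E)
  card_eq := fun e he => (Finset.mem_filter.mp he).2.1

noncomputable def sigEquiv (s : Fin T → ℕ) : (Σ v : Fin T, Fin (s v)) ≃ Fin (∑ v, s v) :=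
  Fintype.equivFinOfCardEq (by simp)

noncomputable def clOf (s : Fin T → ℕ) : Fin (∑ v, s v) → Fin T :=
  fun i => ((sigEquiv T s).symm i).1

/-- The blow-up with class sizes `s`. -/
noncomputable def Bs (s : Fin T → ℕ) : RGraph r := BU r T E (∑ v, s v) (clOf T s)

theorem Bs_n (s : Fin T → ℕ) : (Bs r T E s).n = ∑ v, s v := rfl

/-- Fibers of `clOf` have the prescribed sizes. -/
theorem clOf_fiber_card (s : Fin T → ℕ) (v : Fin T) :
    (Finset.univ.filter fun i => clOf T s i = v).card = s v := by
  classical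
  rw [← Fintype.card_subtype]
  have e1 : {i : Fin (∑ v, s v) // clOf T s i = v} ≃ {p : Σ w : Fin T, Fin (s w) // p.1 = v} :=
    ((sigEquiv T s).subtypeEquiv (fun p => by simp [clOf])).symm
  have e2 : {p : Σ w : Fin T, Fin (s w) // p.1 = v} ≃ Fin (s v) :=
    { toFun := fun p => Fin.cast (congrArg s p.2) p.1.2
      invFun := fun j => ⟨⟨v, j⟩, rfl⟩
      left_inv := by rintro ⟨⟨w, j⟩, rfl⟩; rfl
      right_inv := fun j => rfl }
  rw [Fintype.card_congr (e1.trans e2), Fintype.card_fin]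

theorem bs_isSubgraph {s s' : Fin T → ℕ} (h : ∀ v, s v ≤ s' v) :
    (Bs r T E s).IsSubgraph (Bs r T E s') := by
  set φ : (Σ v : Fin T, Fin (s v)) → (Σ v : Fin T, Fin (s' v)) :=
    Sigma.map id (fun v => Fin.castLE (h v)) with hφ
  have hφinj : Function.Injective φ :=
    Function.Injective.sigma_map Function.injective_id (fun v => Fin.castLE_injective _)
  set f : Fin (∑ v, s v) → Fin (∑ v, s' v) :=
    fun i => sigEquiv T s' (φ ((sigEquiv T s).symm i)) with hf
  have hfinj : Function.Injective f :=
    (sigEquiv T s').injective.comp (hφinj.comp (sigEquiv T s).symm.injective)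
  have hcl : ∀ i, clOf T s' (f i) = clOf T s i := by
    intro i
    simp only [hf, clOf, Equiv.symm_apply_apply]
    rfl
  refine ⟨f, hfinj, ?_⟩
  intro A hA
  obtain ⟨-, hcard, him⟩ := (Finset.mem_filter (s := (Finset.univ : Finset (Finset (Fin (∑ v, s v)))))
    (p := fun B => B.card = r ∧ B.image (clOf T s) ∈ E)).mp hA
  show A.image f ∈ Finset.univ.filter
    (fun B : Finset (Fin (∑ v, s' v)) => B.card = r ∧ B.image (clOf T s') ∈ E)
  refine Finset.mem_filter.mpr ⟨Finset.mem_univ _, ?_, ?_⟩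
  · exact (Finset.card_image_of_injective _ hfinj).trans hcard
  · have : A.image (clOf T s' ∘ f) = A.image (clOf T s) :=
      Finset.image_congr (fun i _ => hcl i)
    exact (Finset.image_image.trans this).symm ▸ him

/-- The family of all `r`-graphs that embed in no blow-up of the pattern. -/
def Fam : Set (RGraph r) := {F | ∀ m : ℕ, ¬ F.IsSubgraph (Bs r T E (fun _ => m))}

theorem free_iff (G : RGraph r) :
    G.Free (Fam r T E) ↔ ∃ m, G.IsSubgraph (Bs r T E (fun _ => m)) := by
  constructor
  · intro hfree
    by_contra hcon
    push_neg at hcon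
    exact hfree G hcon (isSubgraph_refl G)
  · rintro ⟨m, hm⟩ F hF hFG
    exact hF m (isSubgraph_trans hFG hm)

def emptyG (n : ℕ) : RGraph r := ⟨n, ∅, by simp⟩

theorem emptyG_free (hT : 0 < T) (n : ℕ) : (emptyG r n).Free (Fam r T E) := by
  rw [free_iff]
  refine ⟨n, Fin.castLE ?_, Fin.castLE_injective _, ?_⟩
  · calc n = 1 * n := (one_mul n).symm
    _ ≤ T * n := Nat.mul_le_mul_right n hT
    _ = ∑ _v : Fin T, n := by simp [Finset.sum_const, Finset.card_univ, mul_comm]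
  · intro e he
    simp [emptyG] at he
    exact absurd he (Finset.notMem_empty _)
end Graphs

section Counting

variable (r T : ℕ) (E : Finset (Finset (Fin T)))

/-- Upper bound: edges of a blow-up spanned by a vertex set `S` are at most
`∑_{e ∈ E} ∏_{v ∈ e} |S ∩ cl⁻¹(v)|`. -/
theorem count_upper (hr : 0 < r) (hE : ∀ e ∈ E, e.card = r) {N : ℕ} (cl : Fin N → Fin T)
    (S : Finset (Fin N)) :
    ((BU r T E N cl).edges.filter (fun A => A ⊆ S)).card
      ≤ ∑ e ∈ E, ∏ v ∈ e, (S.filter fun i => cl i = v).card := by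
  classical
  set M := (BU r T E N cl).edges.filter (fun A => A ⊆ S) with hM
  have hMfacts : ∀ A ∈ M, A.card = r ∧ A.image cl ∈ E ∧ A ⊆ S := by
    intro A hA
    obtain ⟨h1, h2⟩ := Finset.mem_filter.mp hA
    obtain ⟨-, h3, h4⟩ := Finset.mem_filter.mp h1
    exact ⟨h3, h4, h2⟩
  have hmem : ∀ A ∈ M, A.image cl ∈ E := fun A hA => (hMfacts A hA).2.1
  rw [Finset.card_eq_sum_card_fiberwise hmem]
  refine Finset.sum_le_sum ?_
  intro e he
  set Me := M.filter (fun A => A.image cl = e) with hMe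
  rcases Me.eq_empty_or_nonempty with h0 | hne
  · rw [h0]; simp
  obtain ⟨A₀, hA₀⟩ := hne
  have hA₀3 := hMfacts A₀ (Finset.mem_filter.mp hA₀).1
  have hA₀ne : A₀.Nonempty := Finset.card_pos.mp (by rw [hA₀3.1]; exact hr)
  obtain ⟨i₀, -⟩ := hA₀ne
  haveI : Nonempty (Fin N) := ⟨i₀⟩
  have hfacts : ∀ A ∈ Me, A.card = r ∧ A.image cl = e ∧ A ⊆ S := by
    intro A hA
    obtain ⟨h1, h2⟩ := Finset.mem_filter.mp hA
    exact ⟨(hMfacts A h1).1, h2, (hMfacts A h1).2.2⟩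
  have hInj : ∀ A ∈ Me, Set.InjOn cl (A : Set (Fin N)) := by
    intro A hA
    apply Finset.card_image_iff.mp
    rw [(hfacts A hA).2.1, hE e he, (hfacts A hA).1]
  set g : Finset (Fin N) → (∀ v ∈ e, Fin N) := fun A => fun v _ =>
    if h : (A.filter fun i => cl i = v).Nonempty then (A.filter fun i => cl i = v).min' h
    else Classical.arbitrary _ with hg
  have hgmem : ∀ A ∈ Me, ∀ (v) (hv : v ∈ e), g A v hv ∈ A.filter (fun i => cl i = v) := by
    intro A hA v hv
    have hv' : v ∈ A.image cl := by rw [(hfacts A hA).2.1]; exact hv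
    obtain ⟨j, hj, hcl⟩ := Finset.mem_image.mp hv'
    have hne' : (A.filter fun i => cl i = v).Nonempty :=
      ⟨j, Finset.mem_filter.mpr ⟨hj, hcl⟩⟩
    simp only [hg]
    rw [dif_pos hne']
    exact Finset.min'_mem _ _
  have hsubkey : ∀ A ∈ Me, ∀ A' ∈ Me, g A = g A' → A ⊆ A' := by
    intro A hA A' hA' heq i hi
    have hv : cl i ∈ e := by
      rw [← (hfacts A hA).2.1]; exact Finset.mem_image_of_mem cl hi
    have hsingle : A.filter (fun j => cl j = cl i) = {i} := by
      rw [Finset.eq_singleton_iff_unique_mem]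
      refine ⟨Finset.mem_filter.mpr ⟨hi, rfl⟩, ?_⟩
      intro j hj
      obtain ⟨hjA, hjcl⟩ := Finset.mem_filter.mp hj
      exact hInj A hA hjA hi hjcl
    have h1 : g A (cl i) hv = i := by
      have := hgmem A hA (cl i) hv
      rw [hsingle] at this
      exact Finset.mem_singleton.mp this
    have h2 : g A' (cl i) hv ∈ A' :=
      Finset.filter_subset _ _ (hgmem A' hA' (cl i) hv)
    have h3 : g A (cl i) hv = g A' (cl i) hv := by rw [heq]
    rw [← h1, h3]
    exact h2
  have hinj : Set.InjOn g (Me : Set (Finset (Fin N))) := by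
    intro A hA A' hA' heq
    apply Finset.eq_of_subset_of_card_le (hsubkey A hA A' hA' heq)
    rw [(hfacts A hA).1, (hfacts A' hA').1]
  have hmaps : ∀ A ∈ Me, g A ∈ e.pi (fun v => S.filter fun i => cl i = v) := by
    intro A hA
    rw [Finset.mem_pi]
    intro v hv
    have := hgmem A hA v hv
    obtain ⟨hiA, hicl⟩ := Finset.mem_filter.mp this
    exact Finset.mem_filter.mpr ⟨(hfacts A hA).2.2 hiA, hicl⟩
  calc Me.card ≤ (e.pi (fun v => S.filter fun i => cl i = v)).card :=
        Finset.card_le_card_of_injOn g hmaps hinj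
  _ = ∏ v ∈ e, (S.filter fun i => cl i = v).card := by rw [Finset.card_pi]

/-- Lower bound: a blow-up has at least `∑_{e ∈ E} ∏_{v ∈ e} (fiber sizes)` edges. -/
theorem count_lower (hE : ∀ e ∈ E, e.card = r) {N : ℕ} (cl : Fin N → Fin T) :
    ∑ e ∈ E, ∏ v ∈ e, (Finset.univ.filter fun i => cl i = v).card
      ≤ (BU r T E N cl).edges.card := by
  classical
  set Sig := E.sigma (fun e => e.pi (fun v => Finset.univ.filter fun i => cl i = v)) with hSig
  have hcard : Sig.card = ∑ e ∈ E, ∏ v ∈ e, (Finset.univ.filter fun i => cl i = v).card := by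
    rw [Finset.card_sigma]
    exact Finset.sum_congr rfl (fun e _ => Finset.card_pi _ _)
  rw [← hcard]
  set Ψ : (Σ e : Finset (Fin T), (∀ v ∈ e, Fin N)) → Finset (Fin N) :=
    fun p => p.1.attach.image (fun v => p.2 v.1 v.2) with hΨ
  -- basic facts for members of Sig
  have hfib : ∀ p ∈ Sig, ∀ (v) (hv : v ∈ p.1), cl (p.2 v hv) = v := by
    rintro ⟨e, pf⟩ hp v hv
    have h2 := (Finset.mem_sigma.mp hp).2
    rw [Finset.mem_pi] at h2
    exact (Finset.mem_filter.mp (h2 v hv)).2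
  have hΨcard : ∀ p ∈ Sig, (Ψ p).card = r := by
    rintro ⟨e, pf⟩ hp
    have he := (Finset.mem_sigma.mp hp).1
    have hinj : Set.InjOn (fun v : {x // x ∈ e} => pf v.1 v.2) (e.attach : Set {x // x ∈ e}) := by
      intro v _ w _ hvw
      have hvw' : pf v.1 v.2 = pf w.1 w.2 := hvw
      have h1 := hfib ⟨e, pf⟩ hp v.1 v.2
      have h2 := hfib ⟨e, pf⟩ hp w.1 w.2
      apply Subtype.ext
      rw [← h1, ← h2]
      exact congrArg cl hvw'
    simp only [hΨ]
    rw [Finset.card_image_of_injOn hinj, Finset.card_attach]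
    exact hE e he
  have hΨim : ∀ p ∈ Sig, (Ψ p).image cl = p.1 := by
    rintro ⟨e, pf⟩ hp
    simp only [hΨ]
    rw [Finset.image_image]
    have : e.attach.image (cl ∘ fun v : {x // x ∈ e} => pf v.1 v.2)
        = e.attach.image (fun v => v.1) :=
      Finset.image_congr (fun v _ => hfib ⟨e, pf⟩ hp v.1 v.2)
    rw [this]
    exact Finset.attach_image_val
  have hmaps : ∀ p ∈ Sig, Ψ p ∈ (BU r T E N cl).edges := by
    intro p hp
    refine Finset.mem_filter.mpr ⟨Finset.mem_univ _, hΨcard p hp, ?_⟩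
    rw [hΨim p hp]
    exact (Finset.mem_sigma.mp hp).1
  have hinj : Set.InjOn Ψ (Sig : Set _) := by
    rintro ⟨e, pf⟩ hpc ⟨e', pf'⟩ hpc' heq
    have hp : (⟨e, pf⟩ : Σ e : Finset (Fin T), (∀ v ∈ e, Fin N)) ∈ Sig := hpc
    have hp' : (⟨e', pf'⟩ : Σ e : Finset (Fin T), (∀ v ∈ e, Fin N)) ∈ Sig := hpc'
    have he1 : e = e' := by
      calc e = (Ψ ⟨e, pf⟩).image cl := (hΨim ⟨e, pf⟩ hp).symm
      _ = (Ψ ⟨e', pf'⟩).image cl := by rw [heq]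
      _ = e' := hΨim ⟨e', pf'⟩ hp'
    subst he1
    have hpf : pf = pf' := by
      funext v hv
      have hmem1 : pf v hv ∈ Ψ ⟨e, pf⟩ := by
        simp only [hΨ]
        exact Finset.mem_image.mpr ⟨⟨v, hv⟩, Finset.mem_attach _ _, rfl⟩
      have hmem2 : pf' v hv ∈ Ψ ⟨e, pf⟩ := by
        rw [heq]
        simp only [hΨ]
        exact Finset.mem_image.mpr ⟨⟨v, hv⟩, Finset.mem_attach _ _, rfl⟩
      have hcl1 : cl (pf v hv) = v := hfib ⟨e, pf⟩ hp v hv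
      have hcl2 : cl (pf' v hv) = v := hfib ⟨e, pf'⟩ hp' v hv
      have heE : e ∈ E := (Finset.mem_sigma.mp hp).1
      have hinjcl : Set.InjOn cl ((Ψ ⟨e, pf⟩ : Finset (Fin N)) : Set (Fin N)) := by
        apply Finset.card_image_iff.mp
        rw [hΨim ⟨e, pf⟩ hp, hΨcard ⟨e, pf⟩ hp]
        exact hE e heE
      exact hinjcl hmem1 hmem2 (hcl1.trans hcl2.symm)
    rw [hpf]
  exact Finset.card_le_card_of_injOn Ψ hmaps hinj

end Counting

section Analysis

/-- AM–GM: product over a finset is at most `(sum/card)^card`. -/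
theorem prod_le_avg_pow {ι : Type*} (e : Finset ι) (x : ι → ℝ) (hx : ∀ v ∈ e, 0 ≤ x v)
    (hc : 0 < e.card) :
    ∏ v ∈ e, x v ≤ ((∑ v ∈ e, x v) / e.card) ^ e.card := by
  have hcR : (0:ℝ) < (e.card : ℝ) := by exact_mod_cast hc
  have hgm := Real.geom_mean_le_arith_mean_weighted e (fun _ => (e.card : ℝ)⁻¹) x
    (fun i _ => by positivity)
    (by rw [Finset.sum_const, nsmul_eq_mul]; field_simp)
    hx
  have hsum : ∑ i ∈ e, (e.card : ℝ)⁻¹ * x i = (∑ v ∈ e, x v) / e.card := by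
    rw [← Finset.mul_sum]
    ring
  rw [hsum] at hgm
  have key : ∏ v ∈ e, x v = (∏ i ∈ e, x i ^ ((e.card : ℝ)⁻¹)) ^ e.card := by
    rw [← Finset.prod_pow]
    refine Finset.prod_congr rfl ?_
    intro i hi
    rw [← Real.rpow_natCast (x i ^ ((e.card:ℝ)⁻¹)) e.card, ← Real.rpow_mul (hx i hi)]
    rw [inv_mul_cancel₀ (ne_of_gt hcR), Real.rpow_one]
  rw [key]
  apply pow_le_pow_left₀ _ hgm
  exact Finset.prod_nonneg (fun i hi => Real.rpow_nonneg (hx i hi) _)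

/-- Difference of products bound. -/
theorem prod_sub_prod_le {ι : Type*} (e : Finset ι) (f g : ι → ℝ) (M : ℝ) (hM : 0 ≤ M)
    (h : ∀ v ∈ e, 0 ≤ g v ∧ g v ≤ f v ∧ f v ≤ M ∧ f v - g v ≤ 1) :
    ∏ v ∈ e, f v - ∏ v ∈ e, g v ≤ e.card * M ^ (e.card - 1) := by
  classical
  induction e using Finset.cons_induction with
  | empty => simp
  | cons a t ha IH =>
    have h0 := h a (Finset.mem_cons_self a t)
    have ht : ∀ v ∈ t, 0 ≤ g v ∧ g v ≤ f v ∧ f v ≤ M ∧ f v - g v ≤ 1 :=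
      fun v hv => h v (Finset.mem_cons_of_mem hv)
    have IH' := IH ht
    rw [Finset.prod_cons, Finset.prod_cons, Finset.card_cons]
    have hgnn : 0 ≤ ∏ v ∈ t, g v := Finset.prod_nonneg (fun v hv => (ht v hv).1)
    have hfg : ∏ v ∈ t, g v ≤ ∏ v ∈ t, f v :=
      Finset.prod_le_prod (fun v hv => (ht v hv).1) (fun v hv => (ht v hv).2.1)
    have hgM : ∏ v ∈ t, g v ≤ M ^ t.card := by
      calc ∏ v ∈ t, g v ≤ ∏ _v ∈ t, M :=
            Finset.prod_le_prod (fun v hv => (ht v hv).1)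
              (fun v hv => (ht v hv).2.1.trans ((ht v hv).2.2.1))
      _ = M ^ t.card := Finset.prod_const M
    have hfa0 : 0 ≤ f a := h0.1.trans h0.2.1
    have step1 : f a * ∏ v ∈ t, f v - g a * ∏ v ∈ t, g v
        = f a * (∏ v ∈ t, f v - ∏ v ∈ t, g v) + (f a - g a) * ∏ v ∈ t, g v := by ring
    rw [step1]
    have b1 : f a * (∏ v ∈ t, f v - ∏ v ∈ t, g v) ≤ M * (t.card * M ^ (t.card - 1)) :=
      mul_le_mul h0.2.2.1 IH' (sub_nonneg.mpr hfg) hM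
    have b2 : (f a - g a) * ∏ v ∈ t, g v ≤ 1 * M ^ t.card :=
      mul_le_mul h0.2.2.2 hgM hgnn zero_le_one
    have b3 : M * (t.card * M ^ (t.card - 1)) ≤ t.card * M ^ t.card := by
      rcases Nat.eq_zero_or_pos t.card with h' | h'
      · simp [h']
      · have : M * ((t.card : ℝ) * M ^ (t.card - 1)) = t.card * (M ^ (t.card - 1) * M) := by ring
        rw [this, ← pow_succ, Nat.sub_add_cancel h']
      -- done
    calc f a * (∏ v ∈ t, f v - ∏ v ∈ t, g v) + (f a - g a) * ∏ v ∈ t, g v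
        ≤ t.card * M ^ t.card + 1 * M ^ t.card := add_le_add (b1.trans b3) b2
    _ = (t.card + 1) * M ^ t.card := by ring
    _ = (t.card + 1) * M ^ ((t.card + 1) - 1) := by norm_num
    _ = ((t.card + 1 : ℕ) : ℝ) * M ^ ((t.card + 1) - 1) := by push_cast; ring

/-- The ratio `C(n,r)/n^r` tends to `1/r!`. -/
theorem choose_ratio_tendsto {r : ℕ} (hr : 0 < r) :
    Tendsto (fun n : ℕ => (n.choose r : ℝ) / (n : ℝ) ^ r) atTop (𝓝 (1 / r.factorial)) := by
  have hfac : (0:ℝ) < r.factorial := by exact_mod_cast r.factorial_pos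
  have key : ∀ n : ℕ, r ≤ n → (n.choose r : ℝ) / (n : ℝ) ^ r
      = (∏ i ∈ Finset.range r, (1 - (i : ℝ) / n)) / r.factorial := by
    intro n hn
    have hn0 : (0:ℝ) < n := by
      have : 0 < n := lt_of_lt_of_le hr hn
      exact_mod_cast this
    have h1 : (r.factorial : ℝ) * (n.choose r : ℝ) = ∏ i ∈ Finset.range r, ((n : ℝ) - i) := by
      have := Nat.descFactorial_eq_factorial_mul_choose n r
      have h2 : ((n.descFactorial r : ℕ) : ℝ) = (r.factorial : ℝ) * (n.choose r : ℝ) := by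
        rw [this]; push_cast; ring
      rw [← h2, Nat.descFactorial_eq_prod_range]
      push_cast
      refine Finset.prod_congr rfl ?_
      intro i hi
      have : i ≤ n := le_of_lt (lt_of_lt_of_le (Finset.mem_range.mp hi) hn)
      rw [Nat.cast_sub this]
    have h3 : (n.choose r : ℝ) = (∏ i ∈ Finset.range r, ((n : ℝ) - i)) / r.factorial := by
      field_simp at h1 ⊢
      linarith [h1]
    have h5 : ∀ i ∈ Finset.range r, (1 - (i:ℝ)/n) * n = (n:ℝ) - i := by
      intro i _
      field_simp
    rw [h3, div_div, div_eq_div_iff (by positivity) (by positivity),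
        ← Finset.prod_congr rfl h5, Finset.prod_mul_distrib, Finset.prod_const,
        Finset.card_range]
    ring
  have hlim : Tendsto (fun n : ℕ => (∏ i ∈ Finset.range r, (1 - (i : ℝ) / n)) / r.factorial)
      atTop (𝓝 (1 / r.factorial)) := by
    have hp : Tendsto (fun n : ℕ => ∏ i ∈ Finset.range r, (1 - (i : ℝ) / n)) atTop (𝓝 1) := by
      have : Tendsto (fun n : ℕ => ∏ i ∈ Finset.range r, (1 - (i : ℝ) / n)) atTop
          (𝓝 (∏ _i ∈ Finset.range r, (1:ℝ))) := by
        apply tendsto_finset_prod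
        intro i _
        have : Tendsto (fun n : ℕ => (i : ℝ) / n) atTop (𝓝 0) := by
          have h := tendsto_one_div_atTop_nhds_zero_nat.const_mul (i:ℝ)
          simp only [mul_one_div] at h
          simpa using h
        have h2 := (tendsto_const_nhds (x := (1:ℝ))).sub this
        simpa using h2
      simpa using this
    exact hp.div_const _
  apply hlim.congr'
  filter_upwards [eventually_ge_atTop r] with n hn
  exact (key n hn).symm

end Analysis

section ExNum

theorem exNum_eq (r : ℕ) (𝓕 : Set (RGraph r)) (n : ℕ) :
    exNum r 𝓕 n = sSup {k : ℕ | ∃ G : RGraph r, G.n = n ∧ RGraph.Free 𝓕 G ∧ G.edges.card = k} :=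
  rfl

theorem eset_bdd (r n : ℕ) (𝓕 : Set (RGraph r)) :
    ∀ k ∈ {k : ℕ | ∃ G : RGraph r, G.n = n ∧ RGraph.Free 𝓕 G ∧ G.edges.card = k}, k ≤ 2 ^ n := by
  rintro k ⟨G, hGn, -, rfl⟩
  calc G.edges.card ≤ Fintype.card (Finset (Fin G.n)) := Finset.card_le_univ _
  _ = 2 ^ G.n := by simp
  _ = 2 ^ n := by rw [hGn]

variable (r T : ℕ) (E : Finset (Finset (Fin T)))

theorem exNum_upper (hr : 0 < r) (hT : 0 < T) (hE : ∀ e ∈ E, e.card = r) {n : ℕ} (hn : 0 < n) :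
    (exNum r (Fam r T E) n : ℝ) ≤ lam T E * (n : ℝ) ^ r := by
  classical
  set eset := {k : ℕ | ∃ G : RGraph r, G.n = n ∧ RGraph.Free (Fam r T E) G ∧ G.edges.card = k}
    with heset
  have hbdd : BddAbove eset := ⟨2 ^ n, fun k hk => eset_bdd r n _ k hk⟩
  have hne : eset.Nonempty := ⟨0, emptyG r n, rfl, emptyG_free r T E hT n, by simp [emptyG]⟩
  have hmem : exNum r (Fam r T E) n ∈ eset := by
    rw [exNum_eq]; exact Nat.sSup_mem hne hbdd
  obtain ⟨G, hGn, hGfree, hGcard⟩ := hmem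
  obtain ⟨m, f, finj, fedge⟩ := (free_iff r T E G).mp hGfree
  set N := ∑ _v : Fin T, m with hN
  set cl : Fin N → Fin T := clOf T (fun _ : Fin T => m) with hcl
  set S : Finset (Fin N) := Finset.univ.image f with hS
  set sv := fun v => (S.filter fun i => cl i = v).card with hsv
  have step1 : G.edges.card ≤ ((BU r T E N cl).edges.filter (fun A => A ⊆ S)).card := by
    apply Finset.card_le_card_of_injOn (fun A => A.image f)
    · intro A hA
      refine Finset.mem_filter.mpr ⟨fedge A hA, ?_⟩
      intro i hi
      obtain ⟨j, _, rfl⟩ := Finset.mem_image.mp hi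
      exact Finset.mem_image_of_mem f (Finset.mem_univ j)
    · intro A _ A' _ h
      exact Finset.image_injective finj h
  have step2 := count_upper r T E hr hE cl S
  have hsum : ∑ v, sv v = n := by
    have h1 : S.card = ∑ v ∈ Finset.univ, (S.filter fun i => cl i = v).card :=
      Finset.card_eq_sum_card_fiberwise (fun x _ => Finset.mem_univ (cl x))
    have h2 : S.card = n := by
      rw [hS]
      exact (Finset.card_image_of_injective _ finj).trans (by rw [Finset.card_univ, Fintype.card_fin, hGn])
    simp only [hsv]
    rw [← h1, h2]
  have hnR : (0:ℝ) < (n:ℝ) := by exact_mod_cast hn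
  have hx : (fun v => (sv v : ℝ) / n) ∈ stdSimplex ℝ (Fin T) := by
    constructor
    · intro v; positivity
    · have hsum' : (∑ v, (sv v : ℝ)) = (n : ℝ) := by exact_mod_cast hsum
      rw [← Finset.sum_div, hsum']
      field_simp
  have hreal : ((∑ e ∈ E, ∏ v ∈ e, sv v : ℕ) : ℝ)
      = (n:ℝ)^r * LagF T E (fun v => (sv v : ℝ)/n) := by
    push_cast
    rw [LagF, Finset.mul_sum]
    refine Finset.sum_congr rfl ?_
    intro e he
    rw [Finset.prod_div_distrib, Finset.prod_const, hE e he]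
    field_simp
  calc (exNum r (Fam r T E) n : ℝ) = (G.edges.card : ℝ) := by rw [hGcard]
  _ ≤ (((BU r T E N cl).edges.filter (fun A => A ⊆ S)).card : ℝ) := by exact_mod_cast step1
  _ ≤ ((∑ e ∈ E, ∏ v ∈ e, sv v : ℕ) : ℝ) := by exact_mod_cast step2
  _ = (n:ℝ)^r * LagF T E (fun v => (sv v : ℝ)/n) := hreal
  _ ≤ (n:ℝ)^r * lam T E := by
      apply mul_le_mul_of_nonneg_left (le_lam T E hx) (by positivity)
  _ = lam T E * (n:ℝ)^r := mul_comm _ _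

theorem exNum_lower (hr : 0 < r) (hT : 0 < T) (hE : ∀ e ∈ E, e.card = r) {n : ℕ} (hn : 0 < n) :
    lam T E * (n:ℝ)^r - (E.card * r : ℝ) * (n:ℝ)^(r-1) ≤ (exNum r (Fam r T E) n : ℝ) := by
  classical
  obtain ⟨x, hxmem, hxeq⟩ := exists_lam_eq T E hT
  set m0 : Fin T → ℕ := fun v => ⌊x v * n⌋₊ with hm0
  have hx1 : ∀ v, x v ≤ 1 := by
    intro v
    calc x v ≤ ∑ w, x w := Finset.single_le_sum (fun w _ => hxmem.1 w) (Finset.mem_univ v)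
    _ = 1 := hxmem.2
  have hm0le : ∀ v, (m0 v : ℝ) ≤ x v * n :=
    fun v => Nat.floor_le (mul_nonneg (hxmem.1 v) (Nat.cast_nonneg n))
  have hn' : ∑ v, m0 v ≤ n := by
    have h : ((∑ v, m0 v : ℕ) : ℝ) ≤ (n : ℝ) := by
      push_cast
      calc ∑ v, (m0 v:ℝ) ≤ ∑ v, x v * n := Finset.sum_le_sum (fun v _ => hm0le v)
      _ = (∑ v, x v) * n := by rw [Finset.sum_mul]
      _ = n := by rw [hxmem.2]; ring
    exact_mod_cast h
  set v₀ : Fin T := ⟨0, hT⟩ with hv₀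
  set s : Fin T → ℕ := fun v => m0 v + (if v = v₀ then n - (∑ w, m0 w) else 0) with hs
  have hssum : ∑ v, s v = n := by
    simp only [hs]
    rw [Finset.sum_add_distrib, Finset.sum_ite_eq' Finset.univ v₀ (fun _ => n - ∑ w, m0 w)]
    simp [Nat.add_sub_cancel' hn']
  have hsle : ∀ v, s v ≤ n := by
    intro v
    calc s v ≤ ∑ w, s w := Finset.single_le_sum (fun w _ => Nat.zero_le _) (Finset.mem_univ v)
    _ = n := hssum
  have hGn : (Bs r T E s).n = n := by rw [Bs_n, hssum]
  have hfree : (Bs r T E s).Free (Fam r T E) := by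
    rw [free_iff]
    exact ⟨n, bs_isSubgraph r T E hsle⟩
  have hbdd : BddAbove {k : ℕ | ∃ G : RGraph r, G.n = n ∧ RGraph.Free (Fam r T E) G
      ∧ G.edges.card = k} := ⟨2 ^ n, fun k hk => eset_bdd r n _ k hk⟩
  have hke : ((Bs r T E s).edges.card : ℕ) ≤ exNum r (Fam r T E) n := by
    rw [exNum_eq]
    exact le_csSup hbdd ⟨Bs r T E s, hGn, hfree, rfl⟩
  have hcount := count_lower r T E hE (clOf T s)
  have hcount' : ∑ e ∈ E, ∏ v ∈ e, s v ≤ (Bs r T E s).edges.card := by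
    calc ∑ e ∈ E, ∏ v ∈ e, s v
        = ∑ e ∈ E, ∏ v ∈ e, (Finset.univ.filter fun i => clOf T s i = v).card :=
          Finset.sum_congr rfl (fun e _ => Finset.prod_congr rfl
            (fun v _ => (clOf_fiber_card T s v).symm))
    _ ≤ _ := hcount
  have hperedge : ∀ e ∈ E, (∏ v ∈ e, (x v * n)) - (r:ℝ) * (n:ℝ)^(r-1) ≤ ∏ v ∈ e, (s v : ℝ) := by
    intro e he
    have h1 : (∏ v ∈ e, (x v * n)) - ∏ v ∈ e, (m0 v : ℝ) ≤ e.card * (n:ℝ)^(e.card - 1) := by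
      apply prod_sub_prod_le e _ _ (n:ℝ) (Nat.cast_nonneg n)
      intro v _
      refine ⟨Nat.cast_nonneg _, hm0le v, ?_, ?_⟩
      · calc x v * n ≤ 1 * n := mul_le_mul_of_nonneg_right (hx1 v) (Nat.cast_nonneg n)
        _ = n := one_mul _
      · have := Nat.lt_floor_add_one (x v * (n:ℝ))
        simp only [hm0]
        linarith
    have h2 : ∏ v ∈ e, (m0 v:ℝ) ≤ ∏ v ∈ e, (s v : ℝ) := by
      apply Finset.prod_le_prod (fun v _ => Nat.cast_nonneg _)
      intro v _
      have : m0 v ≤ s v := Nat.le_add_right _ _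
      exact_mod_cast this
    rw [hE e he] at h1
    linarith
  have hlamsum : lam T E * (n:ℝ)^r = ∑ e ∈ E, ∏ v ∈ e, (x v * n) := by
    rw [← hxeq, LagF, Finset.sum_mul]
    refine Finset.sum_congr rfl ?_
    intro e he
    rw [Finset.prod_mul_distrib, Finset.prod_const, hE e he]
  have hsumle : ∑ e ∈ E, ((∏ v ∈ e, (x v * n)) - (r:ℝ) * (n:ℝ)^(r-1))
      ≤ ∑ e ∈ E, ∏ v ∈ e, (s v : ℝ) := Finset.sum_le_sum hperedge
  rw [Finset.sum_sub_distrib, Finset.sum_const] at hsumle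
  have hcast : (∑ e ∈ E, ∏ v ∈ e, (s v : ℝ)) = ((∑ e ∈ E, ∏ v ∈ e, s v : ℕ) : ℝ) := by
    push_cast; rfl
  have hfin : ((∑ e ∈ E, ∏ v ∈ e, s v : ℕ) : ℝ) ≤ (exNum r (Fam r T E) n : ℝ) := by
    have := hcount'.trans hke
    exact_mod_cast this
  have hsmul : (E.card • ((r:ℝ) * (n:ℝ)^(r-1))) = (E.card * r : ℝ) * (n:ℝ)^(r-1) := by
    rw [nsmul_eq_mul]; ring
  rw [hlamsum]
  rw [hsmul] at hsumle
  rw [hcast] at hsumle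
  linarith

theorem lam_mem_turanDensities (hr : 0 < r) (hT : 0 < T) (hE : ∀ e ∈ E, e.card = r) :
    ((r.factorial : ℝ) * lam T E) ∈ turanDensities r := by
  refine ⟨Fam r T E, ?_⟩
  have hu : Tendsto (fun n : ℕ => (exNum r (Fam r T E) n : ℝ) / (n:ℝ)^r) atTop
      (𝓝 (lam T E)) := by
    apply tendsto_of_tendsto_of_tendsto_of_le_of_le'
      (g := fun n : ℕ => lam T E - (E.card * r : ℝ)/n) (h := fun _ : ℕ => lam T E)
    · have h0 : Tendsto (fun n : ℕ => (E.card * r : ℝ)/n) atTop (𝓝 0) := by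
        have h := tendsto_one_div_atTop_nhds_zero_nat.const_mul ((E.card * r : ℕ) : ℝ)
        simp only [mul_one_div] at h
        simpa using h
      have h1 := (tendsto_const_nhds (x := lam T E)).sub h0
      simpa using h1
    · exact tendsto_const_nhds
    · filter_upwards [eventually_ge_atTop 1] with n hn
      have hnpos : 0 < n := hn
      have h1 := exNum_lower r T E hr hT hE hnpos
      have hnR : (0:ℝ) < (n:ℝ) := by exact_mod_cast hnpos
      have hpow : (n:ℝ)^r = (n:ℝ)^(r-1) * n := by
        rw [← pow_succ, Nat.sub_add_cancel hr]
      rw [le_div_iff₀ (by positivity)]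
      calc (lam T E - (E.card * r:ℝ)/n) * (n:ℝ)^r
          = lam T E * (n:ℝ)^r - (E.card * r : ℝ) * ((n:ℝ)^r / n) := by ring
      _ = lam T E * (n:ℝ)^r - (E.card * r : ℝ) * (n:ℝ)^(r-1) := by
          rw [hpow]; field_simp
      _ ≤ (exNum r (Fam r T E) n : ℝ) := h1
    · filter_upwards [eventually_ge_atTop 1] with n hn
      have hnpos : 0 < n := hn
      have hnR : (0:ℝ) < (n:ℝ) := by exact_mod_cast hnpos
      rw [div_le_iff₀ (by positivity)]
      exact exNum_upper r T E hr hT hE hnpos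
  have hw := choose_ratio_tendsto hr
  have hfacne : (1 / (r.factorial:ℝ)) ≠ 0 := by positivity
  have hdiv := hu.div hw hfacne
  have heq : lam T E / (1 / (r.factorial:ℝ)) = (r.factorial:ℝ) * lam T E := by
    rw [one_div, div_eq_mul_inv, inv_inv, mul_comm]
  rw [heq] at hdiv
  apply hdiv.congr'
  filter_upwards [eventually_ge_atTop 1] with n hn
  simp only [Pi.div_apply]
  have hnR : ((n:ℝ))^r ≠ 0 := by
    have : (0:ℝ) < (n:ℝ) := by exact_mod_cast (hn : 0 < n)
    positivity
  rcases eq_or_ne ((n.choose r : ℝ)) 0 with h0 | h0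
  · rw [h0]
    simp only [zero_div, div_zero]
  · field_simp

end ExNum

section Covering

/-- For every `0 < a < 1` there is a Turán density in `(a, a + r!/r^r)`. -/
theorem exists_density {r : ℕ} (hr : 0 < r) {a : ℝ} (ha : 0 < a) (ha1 : a < 1) :
    ∃ x ∈ turanDensities r, a < x ∧ x < a + (r.factorial : ℝ) / (r:ℝ)^r := by
  classical
  have hrR : (0:ℝ) < (r:ℝ) := by exact_mod_cast hr
  have hfacR : (0:ℝ) < (r.factorial : ℝ) := by exact_mod_cast r.factorial_pos
  -- choose T with r! * C(T,r)/T^r > a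
  have hlim : Tendsto (fun T : ℕ => (r.factorial:ℝ) * ((T.choose r : ℝ)/(T:ℝ)^r)) atTop
      (𝓝 ((r.factorial:ℝ) * (1/(r.factorial:ℝ)))) := (choose_ratio_tendsto hr).const_mul _
  have h1' : (r.factorial:ℝ) * (1/(r.factorial:ℝ)) = 1 := by field_simp
  rw [h1'] at hlim
  obtain ⟨T, hTgt, hT1⟩ := (hlim.eventually (eventually_gt_nhds ha1)).and
    (eventually_ge_atTop 1) |>.exists
  have hTpos : 0 < T := hT1
  set fullE : Finset (Finset (Fin T)) := Finset.powersetCard r Finset.univ with hfull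
  have hfullcard : ∀ e ∈ fullE, e.card = r := fun e he => (Finset.mem_powersetCard.mp he).2
  have hlamfull : (T.choose r : ℝ)/(T:ℝ)^r ≤ lam T fullE := by
    have huniform : (fun _ : Fin T => (T:ℝ)⁻¹) ∈ stdSimplex ℝ (Fin T) := by
      constructor
      · intro v; positivity
      · rw [Finset.sum_const, Finset.card_univ, Fintype.card_fin, nsmul_eq_mul]
        have : (T:ℝ) ≠ 0 := by positivity
        field_simp
    have hval : LagF T fullE (fun _ => (T:ℝ)⁻¹) = (T.choose r : ℝ)/(T:ℝ)^r := by
      rw [LagF]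
      have hcongr : ∀ e ∈ fullE, ∏ _v ∈ e, ((T:ℝ)⁻¹) = ((T:ℝ)⁻¹)^r := by
        intro e he; rw [Finset.prod_const, hfullcard e he]
      rw [Finset.sum_congr rfl hcongr, Finset.sum_const, hfull, Finset.card_powersetCard,
          Finset.card_univ, Fintype.card_fin, nsmul_eq_mul, inv_pow, ← div_eq_mul_inv]
    rw [← hval]
    exact le_lam T fullE huniform
  have hbase : a < (r.factorial:ℝ) * lam T fullE := by
    calc a < (r.factorial:ℝ) * ((T.choose r:ℝ)/(T:ℝ)^r) := hTgt
    _ ≤ _ := mul_le_mul_of_nonneg_left hlamfull (le_of_lt hfacR)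
  set P := fullE.powerset.filter (fun E => a < (r.factorial:ℝ) * lam T E) with hP
  have hPne : P.Nonempty := ⟨fullE, Finset.mem_filter.mpr ⟨Finset.mem_powerset_self _, hbase⟩⟩
  obtain ⟨E₀, hE₀P, hmin⟩ := P.exists_min_image Finset.card hPne
  have hE₀sub : E₀ ⊆ fullE := Finset.mem_powerset.mp (Finset.mem_filter.mp hE₀P).1
  have hE₀card : ∀ e ∈ E₀, e.card = r := fun e he => hfullcard e (hE₀sub he)
  have ha₀ : a < (r.factorial:ℝ) * lam T E₀ := (Finset.mem_filter.mp hE₀P).2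
  have hE₀ne : E₀.Nonempty := by
    rcases E₀.eq_empty_or_nonempty with h | h
    · exfalso
      rw [h, lam_empty T hTpos, mul_zero] at ha₀
      exact absurd ha₀ (not_lt.mpr (le_of_lt ha))
    · exact h
  obtain ⟨e₀, he₀⟩ := hE₀ne
  set E₁ := E₀.erase e₀ with hE₁def
  have hE₁le : (r.factorial:ℝ) * lam T E₁ ≤ a := by
    by_contra hcon
    push_neg at hcon
    have hE₁P : E₁ ∈ P := Finset.mem_filter.mpr
      ⟨Finset.mem_powerset.mpr ((Finset.erase_subset _ _).trans hE₀sub), hcon⟩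
    have h1 := hmin E₁ hE₁P
    have hlt := Finset.card_erase_lt_of_mem he₀
    rw [← hE₁def] at hlt
    omega
  refine ⟨(r.factorial:ℝ) * lam T E₀,
    lam_mem_turanDensities r T E₀ hr hTpos hE₀card, ha₀, ?_⟩
  by_contra hcon
  push_neg at hcon
  obtain ⟨x₀, hx₀mem, hx₀eq⟩ := exists_lam_eq T E₀ hTpos
  have hsplit : LagF T E₀ x₀ = LagF T E₁ x₀ + ∏ v ∈ e₀, x₀ v := by
    rw [LagF, LagF, ← Finset.sum_erase_add E₀ _ he₀]
  have he₀card : e₀.card = r := hE₀card e₀ he₀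
  have hsum1 : ∑ v ∈ e₀, x₀ v ≤ 1 := by
    rw [← hx₀mem.2]
    exact Finset.sum_le_sum_of_subset_of_nonneg (Finset.subset_univ e₀)
      (fun v _ _ => hx₀mem.1 v)
  have hsnn : 0 ≤ ∑ v ∈ e₀, x₀ v := Finset.sum_nonneg (fun v _ => hx₀mem.1 v)
  have hprod : ∏ v ∈ e₀, x₀ v ≤ ((∑ v ∈ e₀, x₀ v)/(r:ℝ))^r := by
    have h := prod_le_avg_pow e₀ x₀ (fun v _ => hx₀mem.1 v) (by rw [he₀card]; exact hr)
    rw [he₀card] at h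
    exact h
  have hprodr : ∏ v ∈ e₀, x₀ v ≤ (1/(r:ℝ))^r := by
    refine hprod.trans ?_
    have hb : (∑ v ∈ e₀, x₀ v)/(r:ℝ) ≤ 1/(r:ℝ) := by gcongr
    exact pow_le_pow_left₀ (by positivity) hb r
  have hA : (r.factorial:ℝ) * LagF T E₁ x₀ ≤ a := by
    calc (r.factorial:ℝ) * LagF T E₁ x₀ ≤ (r.factorial:ℝ) * lam T E₁ :=
          mul_le_mul_of_nonneg_left (le_lam T E₁ hx₀mem) (le_of_lt hfacR)
    _ ≤ a := hE₁le
  have hc : (r.factorial:ℝ) * (1/(r:ℝ))^r = (r.factorial:ℝ)/(r:ℝ)^r := by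
    rw [div_pow, one_pow, mul_one_div]
  have h2 : a + (r.factorial:ℝ)/(r:ℝ)^r
      ≤ (r.factorial:ℝ) * LagF T E₁ x₀ + (r.factorial:ℝ) * ∏ v ∈ e₀, x₀ v := by
    calc a + (r.factorial:ℝ)/(r:ℝ)^r ≤ (r.factorial:ℝ) * lam T E₀ := hcon
    _ = (r.factorial:ℝ) * (LagF T E₁ x₀ + ∏ v ∈ e₀, x₀ v) := by rw [← hsplit, hx₀eq]
    _ = _ := by ring
  have hBge : (r.factorial:ℝ)/(r:ℝ)^r ≤ (r.factorial:ℝ) * ∏ v ∈ e₀, x₀ v := by linarith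
  have hprodge : (1/(r:ℝ))^r ≤ ∏ v ∈ e₀, x₀ v := by
    rw [← hc] at hBge
    exact le_of_mul_le_mul_left hBge hfacR
  have hsumge : (1:ℝ) ≤ ∑ v ∈ e₀, x₀ v := by
    by_contra hlt
    push_neg at hlt
    have h3 : ((∑ v ∈ e₀, x₀ v)/(r:ℝ))^r < (1/(r:ℝ))^r := by
      have hb : (∑ v ∈ e₀, x₀ v)/(r:ℝ) < 1/(r:ℝ) := by gcongr
      exact pow_lt_pow_left₀ hb (by positivity) (by omega)
    linarith
  have hsuma : ∑ v ∈ e₀, x₀ v = 1 := le_antisymm hsum1 hsumge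
  have hzero : ∀ v ∈ Finset.univ \ e₀, x₀ v = 0 := by
    have hsd : ∑ v ∈ Finset.univ \ e₀, x₀ v = 0 := by
      have h4 := Finset.sum_sdiff (f := x₀) (Finset.subset_univ e₀)
      rw [hsuma, hx₀mem.2] at h4
      linarith
    intro v hv
    exact (Finset.sum_eq_zero_iff_of_nonneg
      (fun w _ => hx₀mem.1 w)).mp hsd v hv
  have hL0 : LagF T E₁ x₀ = 0 := by
    rw [LagF]
    apply Finset.sum_eq_zero
    intro e' he'
    have hne' : e' ≠ e₀ := Finset.ne_of_mem_erase he'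
    have he'0 : e' ∈ E₀ := Finset.mem_of_mem_erase he'
    have hnsub : ¬ e' ⊆ e₀ := by
      intro hsub
      exact hne' (Finset.eq_of_subset_of_card_le hsub
        (by rw [hE₀card e' he'0, he₀card]))
    obtain ⟨v, hv1, hv2⟩ := Finset.not_subset.mp hnsub
    exact Finset.prod_eq_zero hv1 (hzero v (Finset.mem_sdiff.mpr ⟨Finset.mem_univ v, hv2⟩))
  have hBle : (r.factorial:ℝ) * ∏ v ∈ e₀, x₀ v ≤ (r.factorial:ℝ)/(r:ℝ)^r := by
    rw [← hc]
    exact mul_le_mul_of_nonneg_left hprodr (le_of_lt hfacR)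
  rw [hL0, mul_zero, zero_add] at h2
  linarith

end Covering

end TuranAux


/-- For every `r ≥ 3`, if `(a,b) ⊆ (0,1)` is an open interval disjoint from `Π_∞^(r)`
of length exactly `r!/r^r`, then `a = 0` and `b = r!/r^r`: the interval `(0, r!/r^r)`
is the only gap of maximal length. -/
theorem stmt1 (r : ℕ) (hr : 3 ≤ r) (a b : ℝ)
    (hsub : Set.Ioo a b ⊆ Set.Ioo (0 : ℝ) 1)
    (hdisj : Set.Ioo a b ∩ turanDensities r = ∅)
    (hlen : b - a = (r.factorial : ℝ) / (r : ℝ) ^ r) :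
    a = 0 ∧ b = (r.factorial : ℝ) / (r : ℝ) ^ r := by
  have hr0 : 0 < r := by omega
  have hrR : (0:ℝ) < r := by exact_mod_cast hr0
  have hcpos : (0:ℝ) < (r.factorial : ℝ) / (r:ℝ)^r := by
    have h1 : (0:ℝ) < (r.factorial:ℝ) := by exact_mod_cast r.factorial_pos
    positivity
  have hab : a < b := by linarith
  have ha0 : 0 ≤ a := by
    by_contra h
    push_neg at h
    have hm : a < min b 0 := lt_min hab h
    set y := (a + min b 0)/2 with hy
    have hy1 : a < y := by simp only [hy]; linarith
    have hy2 : y < min b 0 := by simp only [hy]; linarith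
    have hmem := hsub ⟨hy1, lt_of_lt_of_le hy2 (min_le_left _ _)⟩
    have hyneg : y < 0 := lt_of_lt_of_le hy2 (min_le_right _ _)
    linarith [hmem.1]
  have hb1 : b ≤ 1 := by
    by_contra h
    push_neg at h
    have hm : max a 1 < b := max_lt hab h
    set y := (max a 1 + b)/2 with hy
    have hy1 : max a 1 < y := by simp only [hy]; linarith
    have hy2 : y < b := by simp only [hy]; linarith
    have hmem := hsub ⟨lt_of_le_of_lt (le_max_left a 1) hy1, hy2⟩
    have hgt : (1:ℝ) < y := lt_of_le_of_lt (le_max_right a 1) hy1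
    linarith [hmem.2]
  have ha : a = 0 := by
    by_contra h
    have hapos : 0 < a := lt_of_le_of_ne ha0 (Ne.symm h)
    have ha1 : a < 1 := by linarith
    obtain ⟨x, hxmem, hx1, hx2⟩ := TuranAux.exists_density hr0 hapos ha1
    have hbeq : b = a + (r.factorial:ℝ)/(r:ℝ)^r := by linarith
    have hxin : x ∈ Set.Ioo a b := ⟨hx1, by rw [hbeq]; exact hx2⟩
    exact Set.eq_empty_iff_forall_notMem.mp hdisj x ⟨hxin, hxmem⟩
  exact ⟨ha, by linarith⟩
end

section
/- The union over all integers r ≥ 2 of the sets Π_∞^(r) of r-graph Turán densities is dense in [0,1]; that is, the topological closure of ∪_{r≥2} Π_∞^(r) equals [0,1]. -/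
open Filter Topology

section TuranAux

/-- Sum over `r`-subsets of `s` of products of `x`. -/
def esumOn {ι : Type*} [DecidableEq ι] (s : Finset ι) (r : ℕ) (x : ι → ℕ) : ℕ :=
  ∑ I ∈ s.powersetCard r, ∏ i ∈ I, x i

lemma esumOn_congr {ι : Type*} [DecidableEq ι] (s : Finset ι) (r : ℕ) {x y : ι → ℕ}
    (h : ∀ i ∈ s, x i = y i) : esumOn s r x = esumOn s r y := by
  unfold esumOn
  refine Finset.sum_congr rfl fun I hI => Finset.prod_congr rfl fun i hi => ?_
  exact h i ((Finset.mem_powersetCard.1 hI).1 hi)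

lemma esumOn_insert {ι : Type*} [DecidableEq ι] {a : ι} {s : Finset ι} (ha : a ∉ s)
    (r : ℕ) (x : ι → ℕ) :
    esumOn (insert a s) (r + 1) x = esumOn s (r + 1) x + x a * esumOn s r x := by
  unfold esumOn
  rw [Finset.powersetCard_succ_insert ha, Finset.sum_union, Finset.sum_image, Finset.mul_sum]
  · congr 1
    refine Finset.sum_congr rfl fun I hI => ?_
    rw [Finset.prod_insert]
    exact fun haI => ha ((Finset.mem_powersetCard.1 hI).1 haI)
  · intro I hI J hJ h
    have hIs := (Finset.mem_powersetCard.1 hI).1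
    have hJs := (Finset.mem_powersetCard.1 hJ).1
    have : ∀ K ∈ s.powersetCard r, Finset.erase (insert a K) a = K := by
      intro K hK
      exact Finset.erase_insert (fun h' => ha ((Finset.mem_powersetCard.1 hK).1 h'))
    rw [← this I hI, ← this J hJ, h]
  · rw [Finset.disjoint_left]
    intro I hI hI'
    obtain ⟨J, hJ, rfl⟩ := Finset.mem_image.1 hI'
    have : a ∈ insert a J := Finset.mem_insert_self a J
    exact ha ((Finset.mem_powersetCard.1 hI).1 this)
lemma esumOn_pair_decomp {ι : Type*} [DecidableEq ι] {i j : ι} {s : Finset ι}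
    (hi : i ∈ s) (hj : j ∈ s) (hij : i ≠ j) (m : ℕ) (x : ι → ℕ) :
    esumOn s (m + 2) x =
      esumOn ((s.erase i).erase j) (m + 2) x
      + (x i + x j) * esumOn ((s.erase i).erase j) (m + 1) x
      + x i * x j * esumOn ((s.erase i).erase j) m x := by
  set t := (s.erase i).erase j with ht
  have hjt : j ∉ t := Finset.notMem_erase _ _
  have hit : i ∉ insert j t := by
    simp only [Finset.mem_insert, ht, Finset.mem_erase]
    rintro (rfl | ⟨-, h, -⟩)
    · exact hij rfl
    · exact h rfl
  have hs : s = insert i (insert j t) := by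
    rw [ht, Finset.insert_erase (Finset.mem_erase.2 ⟨Ne.symm hij, hj⟩), Finset.insert_erase hi]
  rw [hs, esumOn_insert hit, esumOn_insert hjt, esumOn_insert hjt]
  ring
/-- If all coordinates are at most `b`, the `r`-th symmetric sum is at most `C(k,r)·b^r`. -/
lemma esumOn_le_of_le {k r b : ℕ} {x : Fin k → ℕ} (h : ∀ i, x i ≤ b) :
    esumOn Finset.univ r x ≤ Nat.choose k r * b ^ r := by
  unfold esumOn
  calc ∑ I ∈ (Finset.univ : Finset (Fin k)).powersetCard r, ∏ i ∈ I, x i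
      ≤ ∑ I ∈ (Finset.univ : Finset (Fin k)).powersetCard r, b ^ r := by
        refine Finset.sum_le_sum fun I hI => ?_
        have hcard := (Finset.mem_powersetCard.1 hI).2
        calc ∏ i ∈ I, x i ≤ b ^ I.card :=
              Finset.prod_le_pow_card I x b (fun i _ => h i)
          _ = b ^ r := by rw [hcard]
    _ = Nat.choose k r * b ^ r := by
        rw [Finset.sum_const, Finset.card_powersetCard, Finset.card_univ, Fintype.card_fin,
          smul_eq_mul]

lemma esum_le_balanced {k n : ℕ} (hk : 1 ≤ k) (m : ℕ) :
    ∀ N (x : Fin k → ℕ), (∑ i, x i = n) → (∑ i, x i ^ 2 ≤ N) →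
      esumOn Finset.univ (m + 2) x ≤ Nat.choose k (m + 2) * (n / k + 1) ^ (m + 2) := by
  intro N
  induction N with
  | zero =>
    intro x hsum hsq
    refine esumOn_le_of_le fun i => ?_
    have : x i ^ 2 ≤ 0 := le_trans (Finset.single_le_sum (f := fun l => x l ^ 2)
      (fun l _ => Nat.zero_le _) (Finset.mem_univ i)) hsq
    have hx0 : x i = 0 := by nlinarith [this]
    rw [hx0]
    exact Nat.zero_le _
  | succ N ih =>
    intro x hsum hsq
    by_cases hb : ∀ i, x i ≤ n / k + 1
    · exact esumOn_le_of_le hb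
    · push_neg at hb
      obtain ⟨i, hi⟩ := hb
      have hxi : n / k + 2 ≤ x i := by omega
      -- find a small coordinate j
      have hj : ∃ j, x j ≤ n / k := by
        by_contra hcon
        push_neg at hcon
        have h1 : ∀ j, n / k + 1 ≤ x j := fun j => hcon j
        have h2 : ∑ j ∈ (Finset.univ : Finset (Fin k)).erase i, (n / k + 1) ≤
            ∑ j ∈ (Finset.univ : Finset (Fin k)).erase i, x j :=
          Finset.sum_le_sum fun j _ => h1 j
        rw [Finset.sum_const, smul_eq_mul, Finset.card_erase_of_mem (Finset.mem_univ i),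
          Finset.card_univ, Fintype.card_fin] at h2
        have h3 : x i + ∑ j ∈ (Finset.univ : Finset (Fin k)).erase i, x j = n := by
          rw [Finset.add_sum_erase _ _ (Finset.mem_univ i)]
          exact hsum
        have hmod : n % k < k := Nat.mod_lt _ hk
        have hdm : k * (n / k) + n % k = n := Nat.div_add_mod n k
        obtain ⟨k', rfl⟩ : ∃ k', k = k' + 1 := ⟨k - 1, by omega⟩
        simp only [Nat.add_sub_cancel] at h2
        nlinarith [h2, h3, hxi, hdm, hmod]
      obtain ⟨j, hj⟩ := hj
      have hij : i ≠ j := by rintro rfl; omega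
      set x' := Function.update (Function.update x i (x i - 1)) j (x j + 1) with hx'
      have hx'i : x' i = x i - 1 := by
        rw [hx', Function.update_of_ne hij, Function.update_self]
      have hx'j : x' j = x j + 1 := by rw [hx', Function.update_self]
      have hx'other : ∀ l, l ≠ i → l ≠ j → x' l = x l := by
        intro l hli hlj
        rw [hx', Function.update_of_ne hlj, Function.update_of_ne hli]
      -- sums over the complement agree
      set t := ((Finset.univ : Finset (Fin k)).erase i).erase j with htdef
      have ht : ∀ l ∈ t, x l = x' l := by
        intro l hl
        have := Finset.mem_erase.1 hl
        have := Finset.mem_erase.1 this.2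
        exact (hx'other l this.1 (Finset.mem_erase.1 hl).1).symm
      have hsplit : ∀ y : Fin k → ℕ, ∑ l, y l = y i + (y j + ∑ l ∈ t, y l) := by
        intro y
        rw [htdef, Finset.add_sum_erase _ _ (Finset.mem_erase.2 ⟨Ne.symm hij, Finset.mem_univ j⟩),
          Finset.add_sum_erase _ _ (Finset.mem_univ i)]
      have hte : ∑ l ∈ t, x' l = ∑ l ∈ t, x l :=
        Finset.sum_congr rfl fun l hl => (ht l hl).symm
      have hsum' : ∑ l, x' l = n := by
        rw [hsplit x', hx'i, hx'j, hte]
        rw [hsplit x] at hsum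
        omega
      have hsq' : ∑ l, x' l ^ 2 ≤ N := by
        have e1 : ∑ l, x l ^ 2 = x i ^ 2 + (x j ^ 2 + ∑ l ∈ t, x l ^ 2) := hsplit (fun l => x l ^ 2)
        have e2 : ∑ l, x' l ^ 2 = x' i ^ 2 + (x' j ^ 2 + ∑ l ∈ t, x' l ^ 2) :=
          hsplit (fun l => x' l ^ 2)
        have e3 : ∑ l ∈ t, x l ^ 2 = ∑ l ∈ t, x' l ^ 2 :=
          Finset.sum_congr rfl fun l hl => by rw [ht l hl]
        have key : x' i ^ 2 + x' j ^ 2 + 2 ≤ x i ^ 2 + x j ^ 2 := by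
          rw [hx'i, hx'j]
          obtain ⟨a, hae⟩ : ∃ a, x i = a + 1 := ⟨x i - 1, by omega⟩
          rw [hae]
          simp only [Nat.add_sub_cancel]
          nlinarith [hj, hxi, hae]
        omega
      have hmono : esumOn Finset.univ (m + 2) x ≤ esumOn Finset.univ (m + 2) x' := by
        rw [esumOn_pair_decomp (Finset.mem_univ i) (Finset.mem_univ j) hij m x,
          esumOn_pair_decomp (Finset.mem_univ i) (Finset.mem_univ j) hij m x']
        rw [← htdef]
        have c2 : esumOn t (m+2) x = esumOn t (m+2) x' := esumOn_congr _ _ ht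
        have c1 : esumOn t (m+1) x = esumOn t (m+1) x' := esumOn_congr _ _ ht
        have c0 : esumOn t m x = esumOn t m x' := esumOn_congr _ _ ht
        rw [← c2, ← c1, ← c0, hx'i, hx'j]
        have h1 : x i - 1 + (x j + 1) = x i + x j := by omega
        rw [h1]
        have h2 : x i * x j ≤ (x i - 1) * (x j + 1) := by
          obtain ⟨a, hae⟩ : ∃ a, x i = a + 1 := ⟨x i - 1, by omega⟩
          rw [hae]
          simp only [Nat.add_sub_cancel]
          nlinarith [hj, hxi, hae]
        gcongr
      exact le_trans hmono (ih x' hsum' hsq')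

/-- A graph is `k`-rainbow-colorable. -/
def Rainbow (k : ℕ) {r : ℕ} (G : RGraph r) : Prop :=
  ∃ c : Fin G.n → Fin k, ∀ e ∈ G.edges, Set.InjOn c ↑e

/-- The forbidden family: graphs that are not `k`-rainbow-colorable. -/
def rainbowFam (k r : ℕ) : Set (RGraph r) := {F : RGraph r | ¬ Rainbow k F}

lemma rainbow_of_subgraph {k r : ℕ} {F G : RGraph r} (h : F.IsSubgraph G)
    (hG : Rainbow k G) : Rainbow k F := by
  obtain ⟨f, hfinj, hfe⟩ := h
  obtain ⟨c, hc⟩ := hG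
  refine ⟨c ∘ f, fun e he => ?_⟩
  intro a ha b hb hab
  have himg := hc (e.image f) (hfe e he)
  have ha' : f a ∈ e.image f := Finset.mem_image_of_mem f ha
  have hb' : f b ∈ e.image f := Finset.mem_image_of_mem f hb
  exact hfinj (himg ha' hb' hab)

lemma free_iff_rainbow {k r : ℕ} (G : RGraph r) :
    RGraph.Free (rainbowFam k r) G ↔ Rainbow k G := by
  constructor
  · intro hfree
    by_contra hnr
    exact hfree G hnr ⟨id, fun a b h => h, fun e he => by rwa [Finset.image_id]⟩
  · intro hr F hF hsub
    exact hF (rainbow_of_subgraph hsub hr)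

/-- Counting upper bound: a rainbow-colored graph has at most `esumOn` of the
fiber sizes many edges. -/
lemma card_edges_le_esum {k r : ℕ} (hr : 1 ≤ r) (G : RGraph r) (c : Fin G.n → Fin k)
    (hc : ∀ e ∈ G.edges, Set.InjOn c ↑e) :
    G.edges.card ≤ esumOn (Finset.univ : Finset (Fin k)) r
      (fun i => (Finset.univ.filter (fun v => c v = i)).card) := by
  rcases G.edges.eq_empty_or_nonempty with he | he
  · rw [he]; exact Nat.zero_le _
  have hnE : Nonempty (Fin G.n) := by
    obtain ⟨e, heE⟩ := he
    have hce : e.card = r := G.card_eq e heE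
    have : e.Nonempty := Finset.card_pos.1 (by omega)
    exact ⟨this.choose⟩
  classical
  -- partition edges by their color set
  have hmem : ∀ e ∈ G.edges, e.image c ∈ (Finset.univ : Finset (Fin k)).powersetCard r := by
    intro e heE
    rw [Finset.mem_powersetCard]
    exact ⟨Finset.subset_univ _, by rw [Finset.card_image_of_injOn (hc e heE), G.card_eq e heE]⟩
  rw [Finset.card_eq_sum_card_fiberwise hmem]
  unfold esumOn
  refine Finset.sum_le_sum fun I hI => ?_
  rw [← Finset.card_pi]
  -- injection from edges with color set I into the product of fibers
  set dflt : Fin G.n := Classical.arbitrary _ with hdflt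
  set f : Finset (Fin G.n) → ((i : Fin k) → i ∈ I → Fin G.n) := fun e =>
    fun i _ => if h : (e.filter (fun v => c v = i)).Nonempty
      then (e.filter (fun v => c v = i)).min' h else dflt with hf
  have hkey : ∀ e ∈ G.edges.filter (fun e => e.image c = I), ∀ v ∈ e, ∀ (h : c v ∈ I),
      f e (c v) h = v := by
    intro e heI v hv h
    have h2 := Finset.mem_filter.1 heI
    have hinj := hc e h2.1
    have hnon : (e.filter (fun w => c w = c v)).Nonempty := ⟨v, Finset.mem_filter.2 ⟨hv, rfl⟩⟩
    have : f e (c v) h = (e.filter (fun w => c w = c v)).min' hnon := by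
      rw [hf]; simp only [dif_pos hnon]
    rw [this]
    have hm := Finset.min'_mem _ hnon
    have hm' := Finset.mem_filter.1 hm
    exact hinj hm'.1 hv hm'.2
  refine Finset.card_le_card_of_injOn f (fun e heI => ?_) (fun e₁ he₁ e₂ he₂ hfeq => ?_)
  · -- maps to the pi set
    rw [Finset.mem_coe, Finset.mem_pi]
    intro i hiI
    have h2 := Finset.mem_filter.1 heI
    have hnon : (e.filter (fun v => c v = i)).Nonempty := by
      rw [← h2.2] at hiI
      obtain ⟨v, hv, hcv⟩ := Finset.mem_image.1 hiI
      exact ⟨v, Finset.mem_filter.2 ⟨hv, hcv⟩⟩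
    have : f e i hiI = (e.filter (fun v => c v = i)).min' hnon := by
      rw [hf]; simp only [dif_pos hnon]
    rw [this, Finset.mem_filter]
    exact ⟨Finset.mem_univ _, (Finset.mem_filter.1 (Finset.min'_mem _ hnon)).2⟩
  · -- injectivity
    have he₁' := Finset.mem_coe.1 he₁
    have he₂' := Finset.mem_coe.1 he₂
    have h₁ := Finset.mem_filter.1 he₁'
    have h₂ := Finset.mem_filter.1 he₂'
    apply Finset.Subset.antisymm
    · intro v hv
      have hcv₁ : c v ∈ I := by rw [← h₁.2]; exact Finset.mem_image_of_mem c hv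
      have e1 := hkey e₁ he₁' v hv hcv₁
      have : f e₂ (c v) hcv₁ ∈ e₂ := by
        have hcv₂ : c v ∈ e₂.image c := by rw [h₂.2]; exact hcv₁
        obtain ⟨w, hw, hcw⟩ := Finset.mem_image.1 hcv₂
        have hnon : (e₂.filter (fun u => c u = c v)).Nonempty := ⟨w, Finset.mem_filter.2 ⟨hw, hcw⟩⟩
        have : f e₂ (c v) hcv₁ = (e₂.filter (fun u => c u = c v)).min' hnon := by
          rw [hf]; simp only [dif_pos hnon]
        rw [this]
        exact Finset.mem_of_mem_filter _ (Finset.min'_mem _ hnon)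
      rw [← e1, hfeq]
      exact this
    · intro v hv
      have hcv₂ : c v ∈ I := by rw [← h₂.2]; exact Finset.mem_image_of_mem c hv
      have e2 := hkey e₂ he₂' v hv hcv₂
      have : f e₁ (c v) hcv₂ ∈ e₁ := by
        have hcv₁ : c v ∈ e₁.image c := by rw [h₁.2]; exact hcv₂
        obtain ⟨w, hw, hcw⟩ := Finset.mem_image.1 hcv₁
        have hnon : (e₁.filter (fun u => c u = c v)).Nonempty := ⟨w, Finset.mem_filter.2 ⟨hw, hcw⟩⟩
        have : f e₁ (c v) hcv₂ = (e₁.filter (fun u => c u = c v)).min' hnon := by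
          rw [hf]; simp only [dif_pos hnon]
        rw [this]
        exact Finset.mem_of_mem_filter _ (Finset.min'_mem _ hnon)
      rw [← e2, ← hfeq]
      exact this

section Construction

variable {n k r : ℕ}

/-- Embedding of the `a`-th vertex of color class `i` into `Fin n`. -/
def emb (hk : 1 ≤ k) (i : Fin k) (a : Fin (n / k)) : Fin n :=
  ⟨a.1 * k + i.1, by
    have h1 : a.1 + 1 ≤ n / k := a.isLt
    have h2 : (a.1 + 1) * k ≤ (n / k) * k := Nat.mul_le_mul_right k h1
    have h3 : (n / k) * k ≤ n := Nat.div_mul_le_self n k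
    have h4 : i.1 < k := i.isLt
    calc a.1 * k + i.1 < a.1 * k + k := by omega
      _ = (a.1 + 1) * k := by ring
      _ ≤ n := le_trans h2 h3⟩

/-- The canonical coloring `v ↦ v % k`. -/
def col (hk : 1 ≤ k) (v : Fin n) : Fin k := ⟨v.1 % k, Nat.mod_lt _ hk⟩

lemma col_emb (hk : 1 ≤ k) (i : Fin k) (a : Fin (n / k)) : col hk (emb hk i a) = i := by
  apply Fin.ext
  show (a.1 * k + i.1) % k = i.1
  rw [Nat.add_comm, Nat.add_mul_mod_self_right]
  exact Nat.mod_eq_of_lt i.isLt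

lemma emb_inj (hk : 1 ≤ k) {i i' : Fin k} {a a' : Fin (n / k)}
    (h : emb (n := n) hk i a = emb hk i' a') : i = i' ∧ a = a' := by
  have hi : i = i' := by
    have := congrArg (col hk) h
    rwa [col_emb, col_emb] at this
  subst hi
  refine ⟨rfl, ?_⟩
  have hval : a.1 * k + i.1 = a'.1 * k + i.1 := congrArg Fin.val h
  have : a.1 = a'.1 := by
    have := Nat.eq_of_mul_eq_mul_right hk (by omega : a.1 * k = a'.1 * k)
    exact this
  exact Fin.ext this

/-- Domain of the construction: pairs (color set, transversal). -/
def consDom (n k r : ℕ) : Finset ((I : Finset (Fin k)) × ((i : Fin k) → i ∈ I → Fin (n / k))) :=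
  ((Finset.univ : Finset (Fin k)).powersetCard r).sigma
    (fun I => I.pi (fun _ => (Finset.univ : Finset (Fin (n / k)))))

def consMap (hk : 1 ≤ k) (p : (I : Finset (Fin k)) × ((i : Fin k) → i ∈ I → Fin (n / k))) :
    Finset (Fin n) :=
  p.1.attach.image (fun iw => emb hk iw.1 (p.2 iw.1 iw.2))

lemma consMap_image_col (hk : 1 ≤ k)
    (p : (I : Finset (Fin k)) × ((i : Fin k) → i ∈ I → Fin (n / k))) :
    (consMap (n := n) hk p).image (col hk) = p.1 := by
  unfold consMap
  rw [Finset.image_image]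
  have : (col hk ∘ fun iw : {x // x ∈ p.1} => emb (n := n) hk iw.1 (p.2 iw.1 iw.2))
      = fun iw => iw.1 := by
    funext iw
    exact col_emb hk _ _
  rw [this, Finset.attach_image_val]

lemma consMap_card (hk : 1 ≤ k) (p : (I : Finset (Fin k)) × ((i : Fin k) → i ∈ I → Fin (n / k))) :
    (consMap (n := n) hk p).card = p.1.card := by
  unfold consMap
  rw [Finset.card_image_of_injOn, Finset.card_attach]
  intro iw _ iw' _ h
  obtain ⟨h1, -⟩ := emb_inj hk h
  exact Subtype.ext h1

lemma consMap_rainbow (hk : 1 ≤ k)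
    (p : (I : Finset (Fin k)) × ((i : Fin k) → i ∈ I → Fin (n / k))) :
    Set.InjOn (col hk) ((consMap (n := n) hk p : Finset (Fin n)) : Set (Fin n)) := by
  intro u hu w hw hcol
  obtain ⟨iw, -, rfl⟩ := Finset.mem_image.1 (Finset.mem_coe.1 hu)
  obtain ⟨iw', -, rfl⟩ := Finset.mem_image.1 (Finset.mem_coe.1 hw)
  rw [col_emb, col_emb] at hcol
  have hiw : iw = iw' := Subtype.ext hcol
  rw [hiw]

lemma consMap_injOn (hk : 1 ≤ k) :
    Set.InjOn (consMap (n := n) hk) ↑(consDom n k r) := by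
  intro p _ p' _ h
  have h1 : p.1 = p'.1 := by
    rw [← consMap_image_col (n := n) hk p, ← consMap_image_col (n := n) hk p', h]
  obtain ⟨I, f⟩ := p
  obtain ⟨I', f'⟩ := p'
  simp only at h1
  subst h1
  have hf : f = f' := by
    funext i hi
    have hmem : emb (n := n) hk i (f i hi) ∈ consMap hk ⟨I, f'⟩ := by
      rw [← h]
      exact Finset.mem_image.2 ⟨⟨i, hi⟩, Finset.mem_attach _ _, rfl⟩
    obtain ⟨iw, -, heq⟩ := Finset.mem_image.1 hmem
    obtain ⟨hii, hfa⟩ := emb_inj hk heq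
    subst hii
    rw [← hfa]
  rw [hf]

lemma consDom_card (hk : 1 ≤ k) :
    (consDom n k r).card = Nat.choose k r * (n / k) ^ r := by
  unfold consDom
  rw [Finset.card_sigma]
  have : ∀ I ∈ (Finset.univ : Finset (Fin k)).powersetCard r,
      (I.pi (fun _ => (Finset.univ : Finset (Fin (n / k))))).card = (n / k) ^ r := by
    intro I hI
    rw [Finset.card_pi]
    rw [Finset.prod_const, Finset.card_univ, Fintype.card_fin, (Finset.mem_powersetCard.1 hI).2]
  rw [Finset.sum_congr rfl this, Finset.sum_const, Finset.card_powersetCard, Finset.card_univ,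
    Fintype.card_fin, smul_eq_mul]

/-- The construction graph. -/
def consGraph (n k r : ℕ) (hk : 1 ≤ k) : RGraph r where
  n := n
  edges := (consDom n k r).image (consMap hk)
  card_eq := by
    intro e he
    obtain ⟨p, hp, rfl⟩ := Finset.mem_image.1 he
    rw [consMap_card hk]
    exact (Finset.mem_powersetCard.1 (Finset.mem_sigma.1 hp).1).2

lemma consGraph_card (n k r : ℕ) (hk : 1 ≤ k) :
    (consGraph n k r hk).edges.card = Nat.choose k r * (n / k) ^ r := by
  show ((consDom n k r).image (consMap hk)).card = _
  rw [Finset.card_image_of_injOn (consMap_injOn hk), consDom_card hk]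

lemma consGraph_rainbow (n k r : ℕ) (hk : 1 ≤ k) :
    ∀ e ∈ (consGraph n k r hk).edges,
      Set.InjOn (col (n := (consGraph n k r hk).n) hk) ↑e := by
  intro e he
  obtain ⟨p, -, rfl⟩ := Finset.mem_image.1 he
  exact consMap_rainbow hk p

end Construction


/-- helper: `(⌊n/k⌋ + c)/(n - i) → 1/k`. -/
lemma tendsto_floor_div {k : ℕ} (hk : 1 ≤ k) (c : ℝ) (i : ℕ) :
    Tendsto (fun n : ℕ => (((n / k : ℕ) : ℝ) + c) / ((n : ℝ) - i)) atTop (𝓝 (1 / k)) := by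
  have hk0 : (0 : ℝ) < k := by exact_mod_cast hk
  -- difference from 1/k
  have hkey : ∀ᶠ n : ℕ in atTop,
      (((n / k : ℕ) : ℝ) + c) / ((n : ℝ) - i) - 1 / k
        = ((k : ℝ) * c + i - ((n % k : ℕ) : ℝ)) / ((k : ℝ) * ((n : ℝ) - i)) := by
    filter_upwards [eventually_gt_atTop i] with n hn
    have hni : (0 : ℝ) < (n : ℝ) - i := by
      have : (i : ℝ) < n := by exact_mod_cast hn
      linarith
    have hdm : (k : ℝ) * ((n / k : ℕ) : ℝ) + ((n % k : ℕ) : ℝ) = (n : ℝ) := by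
      exact_mod_cast congrArg (Nat.cast : ℕ → ℝ) (Nat.div_add_mod n k)
    calc (((n / k : ℕ) : ℝ) + c) / ((n : ℝ) - i) - 1 / k
        = ((((n / k : ℕ) : ℝ) + c) * k - ((n : ℝ) - i) * 1) / (((n : ℝ) - i) * k) :=
          div_sub_div _ _ (ne_of_gt hni) (ne_of_gt hk0)
      _ = ((k : ℝ) * c + i - ((n % k : ℕ) : ℝ)) / ((k : ℝ) * ((n : ℝ) - i)) := by
          rw [mul_comm ((n : ℝ) - i) (k : ℝ)]
          congr 1
          linear_combination hdm
  have hz : Tendsto (fun n : ℕ =>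
      (((n / k : ℕ) : ℝ) + c) / ((n : ℝ) - i) - 1 / k) atTop (𝓝 0) := by
    apply squeeze_zero_norm' (a := fun n : ℕ => ((k : ℝ) * |c| + i + k) / ((k : ℝ) * ((n : ℝ) - i)))
    · filter_upwards [hkey, eventually_gt_atTop i] with n hn hni
      rw [hn]
      have hpos : (0 : ℝ) < (n : ℝ) - i := by
        have : (i : ℝ) < n := by exact_mod_cast hni
        linarith
      rw [Real.norm_eq_abs, abs_div, abs_of_pos (by positivity : (0:ℝ) < (k : ℝ) * ((n:ℝ) - i))]
      apply div_le_div_of_nonneg_right ?_ (by positivity)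
      have hmod : ((n % k : ℕ) : ℝ) < k := by exact_mod_cast Nat.mod_lt n hk
      have hmod0 : (0 : ℝ) ≤ ((n % k : ℕ) : ℝ) := by positivity
      have hle : (k:ℝ) * c ≤ (k:ℝ) * |c| :=
        mul_le_mul_of_nonneg_left (le_abs_self c) (le_of_lt hk0)
      have hge : -((k:ℝ) * |c|) ≤ (k:ℝ) * c := by
        have h := neg_abs_le c
        nlinarith
      have hi0 : (0:ℝ) ≤ (i:ℝ) := by positivity
      rw [abs_le]
      constructor <;> [skip; skip] <;> nlinarith [hmod, hmod0, hle, hge, hi0]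
    · -- the bound tends to 0
      have h1 : Tendsto (fun n : ℕ => (k : ℝ) * ((n : ℝ) - i)) atTop atTop := by
        apply Tendsto.const_mul_atTop hk0
        exact tendsto_atTop_add_const_right _ _ tendsto_natCast_atTop_atTop
      exact Tendsto.div_atTop tendsto_const_nhds h1
  have h2 := hz.add (tendsto_const_nhds (x := 1 / (k:ℝ)) (f := atTop))
  simp only [sub_add_cancel, zero_add] at h2
  exact h2

lemma exNum_bounds {k r : ℕ} (hk : 1 ≤ k) (m : ℕ) (hr : r = m + 2) (n : ℕ) :
    Nat.choose k r * (n / k) ^ r ≤ exNum r (rainbowFam k r) n ∧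
      exNum r (rainbowFam k r) n ≤ Nat.choose k r * (n / k + 1) ^ r := by
  classical
  set S : Set ℕ := {c : ℕ | ∃ G : RGraph r, G.n = n ∧ RGraph.Free (rainbowFam k r) G ∧
    G.edges.card = c} with hS
  have hub : ∀ c ∈ S, c ≤ Nat.choose k r * (n / k + 1) ^ r := by
    rintro c ⟨G, hGn, hGfree, hGcard⟩
    have hrb : Rainbow k G := (free_iff_rainbow G).1 hGfree
    obtain ⟨col, hcol⟩ := hrb
    have h1 : G.edges.card ≤ esumOn (Finset.univ : Finset (Fin k)) r
        (fun i => (Finset.univ.filter (fun v => col v = i)).card) :=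
      card_edges_le_esum (by omega) G col hcol
    have hsum : ∑ i, (Finset.univ.filter (fun v => col v = i)).card = n := by
      have := Finset.card_eq_sum_card_fiberwise
        (f := col) (s := (Finset.univ : Finset (Fin G.n)))
        (t := (Finset.univ : Finset (Fin k))) (fun x _ => Finset.mem_univ _)
      rw [Finset.card_univ, Fintype.card_fin] at this
      exact this.symm.trans hGn
    have h2 := esum_le_balanced hk m (∑ i, (Finset.univ.filter (fun v => col v = i)).card ^ 2)
      (fun i => (Finset.univ.filter (fun v => col v = i)).card) hsum le_rfl
    rw [← hr] at h2
    omega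
  have hmem : Nat.choose k r * (n / k) ^ r ∈ S := by
    refine ⟨consGraph n k r hk, rfl, ?_, consGraph_card n k r hk⟩
    rw [free_iff_rainbow]
    exact ⟨col hk, consGraph_rainbow n k r hk⟩
  constructor
  · exact le_csSup ⟨Nat.choose k r * (n / k + 1) ^ r, fun c hc => hub c hc⟩ hmem
  · exact csSup_le ⟨_, hmem⟩ hub

lemma choose_cast_eq {n r : ℕ} (h : r ≤ n) :
    (n.choose r : ℝ) * (r.factorial : ℝ) = ∏ i ∈ Finset.range r, ((n : ℝ) - i) := by
  have h1 : r.factorial * n.choose r = n.descFactorial r :=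
    (Nat.descFactorial_eq_factorial_mul_choose n r).symm
  have h2 : n.descFactorial r = ∏ i ∈ Finset.range r, (n - i) :=
    Nat.descFactorial_eq_prod_range n r
  have h3 : ((∏ i ∈ Finset.range r, (n - i) : ℕ) : ℝ) = ∏ i ∈ Finset.range r, ((n : ℝ) - i) := by
    rw [Nat.cast_prod]
    refine Finset.prod_congr rfl fun i hi => ?_
    have : i ≤ n := le_trans (le_of_lt (Finset.mem_range.1 hi)) h
    exact Nat.cast_sub this
  rw [mul_comm]
  rw [← h3, ← h2, ← h1]
  push_cast
  ring

lemma prod_range_pos {n r : ℕ} (h : r ≤ n) :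
    0 < ∏ i ∈ Finset.range r, ((n : ℝ) - i) := by
  refine Finset.prod_pos fun i hi => ?_
  have : (i : ℝ) < (n : ℝ) := by
    exact_mod_cast lt_of_lt_of_le (Finset.mem_range.1 hi) h
  linarith

lemma tendsto_ratio {k r : ℕ} (hk : 1 ≤ k) (c : ℝ) :
    Tendsto (fun n : ℕ => ((k.choose r : ℝ) * (((n / k : ℕ) : ℝ) + c) ^ r) / (n.choose r : ℝ))
      atTop (𝓝 (((r.factorial : ℝ) * (k.choose r : ℝ)) / (k : ℝ) ^ r)) := by
  have hk0 : (0 : ℝ) < k := by exact_mod_cast hk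
  have hprod : Tendsto
      (fun n : ℕ => ((k.choose r : ℝ) * (r.factorial : ℝ)) *
        ∏ i ∈ Finset.range r, ((((n / k : ℕ) : ℝ) + c) / ((n : ℝ) - i))) atTop
      (𝓝 (((k.choose r : ℝ) * (r.factorial : ℝ)) * ∏ _i ∈ Finset.range r, (1 / (k:ℝ)))) :=
    Tendsto.const_mul _ (tendsto_finset_prod _ (fun i _ => tendsto_floor_div hk c i))
  have heq : ((k.choose r : ℝ) * (r.factorial : ℝ)) * ∏ _i ∈ Finset.range r, (1 / (k:ℝ))
      = ((r.factorial : ℝ) * (k.choose r : ℝ)) / (k : ℝ) ^ r := by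
    rw [Finset.prod_const, Finset.card_range, div_pow, one_pow]
    field_simp
  rw [heq] at hprod
  apply hprod.congr'
  filter_upwards [eventually_ge_atTop r] with n hn
  have hcne : (0:ℝ) < (n.choose r : ℝ) := by
    exact_mod_cast Nat.choose_pos hn
  have hpne := prod_range_pos hn
  have hch := choose_cast_eq hn
  rw [Finset.prod_div_distrib, Finset.prod_const, Finset.card_range]
  rw [eq_div_iff (ne_of_gt hcne)]
  have hfac : (0:ℝ) < (r.factorial : ℝ) := by exact_mod_cast r.factorial_pos
  field_simp
  linear_combination ((k.choose r : ℝ) * (((n / k : ℕ) : ℝ) + c) ^ r) * hch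

lemma tendsto_exNum_density {k r : ℕ} (hk : 1 ≤ k) (hr : 2 ≤ r) :
    Tendsto (fun n : ℕ => (exNum r (rainbowFam k r) n : ℝ) / (n.choose r : ℝ)) atTop
      (𝓝 (((r.factorial : ℝ) * (k.choose r : ℝ)) / (k : ℝ) ^ r)) := by
  obtain ⟨m, hm⟩ : ∃ m, r = m + 2 := ⟨r - 2, by omega⟩
  apply tendsto_of_tendsto_of_tendsto_of_le_of_le' (tendsto_ratio hk 0) (tendsto_ratio hk 1)
  · filter_upwards [eventually_ge_atTop r] with n hn
    have hb := (exNum_bounds hk m hm n).1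
    have hc0 : (0:ℝ) < (n.choose r : ℝ) := by exact_mod_cast Nat.choose_pos hn
    rw [div_le_div_iff_of_pos_right hc0]
    have : ((Nat.choose k r * (n / k) ^ r : ℕ) : ℝ) ≤ (exNum r (rainbowFam k r) n : ℝ) := by
      exact_mod_cast hb
    calc (k.choose r : ℝ) * (((n / k : ℕ) : ℝ) + 0) ^ r
        = ((Nat.choose k r * (n / k) ^ r : ℕ) : ℝ) := by push_cast; ring
      _ ≤ _ := this
  · filter_upwards [eventually_ge_atTop r] with n hn
    have hb := (exNum_bounds hk m hm n).2
    have hc0 : (0:ℝ) < (n.choose r : ℝ) := by exact_mod_cast Nat.choose_pos hn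
    rw [div_le_div_iff_of_pos_right hc0]
    have : ((exNum r (rainbowFam k r) n : ℕ) : ℝ)
        ≤ ((Nat.choose k r * (n / k + 1) ^ r : ℕ) : ℝ) := by exact_mod_cast hb
    calc (exNum r (rainbowFam k r) n : ℝ)
        ≤ ((Nat.choose k r * (n / k + 1) ^ r : ℕ) : ℝ) := this
      _ = (k.choose r : ℝ) * (((n / k : ℕ) : ℝ) + 1) ^ r := by push_cast; ring

/-- membership in turanDensities -/
lemma dval_mem (r k : ℕ) (hk : 1 ≤ k) (hr : 2 ≤ r) :
    ((r.factorial : ℝ) * (k.choose r : ℝ)) / (k : ℝ) ^ r ∈ turanDensities r :=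
  ⟨rainbowFam k r, tendsto_exNum_density hk hr⟩

noncomputable def dval (r k : ℕ) : ℝ := ((r.factorial : ℝ) * (k.choose r : ℝ)) / (k : ℝ) ^ r

lemma dval_prod (r k : ℕ) (hk : 1 ≤ k) :
    dval r k = ∏ i ∈ Finset.range r, (((k - i : ℕ) : ℝ) / (k : ℝ)) := by
  have hk0 : (0:ℝ) < (k:ℝ) := by exact_mod_cast hk
  have h1 : r.factorial * k.choose r = k.descFactorial r :=
    (Nat.descFactorial_eq_factorial_mul_choose k r).symm
  have h2 : k.descFactorial r = ∏ i ∈ Finset.range r, (k - i) :=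
    Nat.descFactorial_eq_prod_range k r
  rw [Finset.prod_div_distrib, Finset.prod_const, Finset.card_range]
  unfold dval
  congr 1
  rw [← Nat.cast_prod, ← h2, ← h1]
  push_cast
  ring

lemma dval_nonneg (r k : ℕ) : 0 ≤ dval r k := by
  unfold dval
  positivity

lemma dval_le_one (r k : ℕ) (hk : 1 ≤ k) : dval r k ≤ 1 := by
  rw [dval_prod r k hk]
  have hk0 : (0:ℝ) < (k:ℝ) := by exact_mod_cast hk
  refine Finset.prod_le_one (fun i _ => by positivity) (fun i _ => ?_)
  rw [div_le_one hk0]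
  exact_mod_cast Nat.sub_le k i

lemma dval_succ (r k : ℕ) (hk : 1 ≤ k) :
    dval (r + 1) k = dval r k * (((k - r : ℕ) : ℝ) / (k : ℝ)) := by
  rw [dval_prod _ _ hk, dval_prod _ _ hk, Finset.prod_range_succ]

lemma dval_two (k : ℕ) (hk : 1 ≤ k) : dval 2 k = 1 - 1 / (k : ℝ) := by
  have hk0 : (0:ℝ) < (k:ℝ) := by exact_mod_cast hk
  rw [dval_prod _ _ hk]
  rw [show Finset.range 2 = {0, 1} from rfl]
  rw [Finset.prod_insert (by simp), Finset.prod_singleton]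
  have h1 : ((k - 1 : ℕ) : ℝ) = (k : ℝ) - 1 := by
    have := Nat.cast_sub (R := ℝ) hk
    rwa [Nat.cast_one] at this
  simp only [Nat.sub_zero, h1]
  field_simp

lemma dval_eq_zero (r k : ℕ) (hk : 1 ≤ k) (h : k < r) : dval r k = 0 := by
  rw [dval_prod _ _ hk]
  apply Finset.prod_eq_zero (Finset.mem_range.2 h)
  simp

lemma dval_le_exp (r k : ℕ) (hk : 1 ≤ k) :
    dval r k ≤ Real.exp (-(∑ i ∈ Finset.range r, (i : ℝ)) / (k : ℝ)) := by
  have hk0 : (0:ℝ) < (k:ℝ) := by exact_mod_cast hk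
  rw [dval_prod _ _ hk]
  have : Real.exp (-(∑ i ∈ Finset.range r, (i : ℝ)) / (k : ℝ))
      = ∏ i ∈ Finset.range r, Real.exp (-(i : ℝ) / (k : ℝ)) := by
    rw [← Real.exp_sum]
    congr 1
    rw [← Finset.sum_div, ← Finset.sum_neg_distrib]
  rw [this]
  refine Finset.prod_le_prod (fun i _ => by positivity) (fun i _ => ?_)
  rcases le_or_gt i k with h | h
  · have hcast : ((k - i : ℕ) : ℝ) = (k : ℝ) - i := by exact Nat.cast_sub h
    rw [hcast]
    have h1 := Real.add_one_le_exp (-(i : ℝ) / (k : ℝ))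
    have hid : (-(i:ℝ)/(k:ℝ)) * (k:ℝ) = -(i:ℝ) := by field_simp
    rw [div_le_iff₀ hk0]
    nlinarith [h1, hid, hk0]
  · have h0 : k - i = 0 := by omega
    rw [h0]
    simp only [Nat.cast_zero, zero_div]
    positivity

lemma sum_range_cast (m : ℕ) : ∑ i ∈ Finset.range m, (i : ℝ) = ((m : ℝ) ^ 2 - m) / 2 := by
  have h := Finset.sum_range_id_mul_two m
  rcases Nat.eq_zero_or_pos m with rfl | hm
  · simp
  have hcast : ((∑ i ∈ Finset.range m, i) * 2 : ℕ) = ((m * (m - 1) : ℕ) : ℝ) := by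
    exact_mod_cast congrArg (Nat.cast : ℕ → ℝ) h
  have h3 : ((m - 1 : ℕ) : ℝ) = (m : ℝ) - 1 := by
    have := Nat.cast_sub (R := ℝ) hm
    rwa [Nat.cast_one] at this
  push_cast at hcast
  rw [h3] at hcast
  nlinarith [hcast]

set_option maxHeartbeats 1000000 in
lemma dval_dense (x : ℝ) (hx : x ∈ Set.Icc (0:ℝ) 1) (ε : ℝ) (hε : 0 < ε) :
    ∃ r k : ℕ, 2 ≤ r ∧ 1 ≤ k ∧ |dval r k - x| < ε := by
  classical
  obtain ⟨hx0, hx1⟩ := hx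
  by_cases hsm : x ≤ ε / 2
  · refine ⟨2, 1, le_rfl, le_rfl, ?_⟩
    have hz : dval 2 1 = 0 := by rw [dval_two 1 le_rfl]; norm_num
    rw [hz, abs_of_nonpos (by linarith)]
    linarith
  push_neg at hsm
  have hxpos : 0 < x := lt_trans (by positivity) hsm
  set L : ℝ := max (Real.log (2 / ε)) 0 with hL
  have hL0 : 0 ≤ L := le_max_right _ _
  -- choose k
  obtain ⟨k₁, hk₁⟩ := exists_nat_ge (max (2 / ε) ((8 * L + 8) / ε ^ 2))
  set k : ℕ := k₁ + 1 with hkdef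
  have hk : 1 ≤ k := Nat.le_add_left 1 k₁
  have hkR : (0:ℝ) < (k:ℝ) := by exact_mod_cast hk
  have hk2 : 2 / ε < (k : ℝ) := by
    have := le_max_left (2 / ε) ((8 * L + 8) / ε ^ 2)
    push_cast [hkdef]
    nlinarith [hk₁, this]
  have hkinv : 1 / (k:ℝ) < ε / 2 := by
    rw [div_lt_div_iff₀ hkR (by norm_num : (0:ℝ) < 2)]
    rw [div_lt_iff₀ hε] at hk2
    nlinarith [hk2]
  have hkL : 8 * L + 8 ≤ ε ^ 2 * (k : ℝ) := by
    have h1 := le_max_right (2 / ε) ((8 * L + 8) / ε ^ 2)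
    have h2 : ((8 * L + 8) / ε ^ 2) ≤ (k₁ : ℝ) := le_trans h1 hk₁
    have h3 : (k₁ : ℝ) ≤ (k : ℝ) := by push_cast [hkdef]; linarith
    rw [div_le_iff₀ (by positivity : (0:ℝ) < ε ^ 2)] at h2
    nlinarith [h2, h3]
  -- find first r with dval < x
  have hPex : ∃ j : ℕ, dval (j + 2) k < x := by
    refine ⟨k - 1, ?_⟩
    have : k < k - 1 + 2 := by omega
    rw [dval_eq_zero _ _ hk this]
    exact hxpos
  obtain ⟨j₀, hspec, hmin'⟩ : ∃ j₀, dval (j₀ + 2) k < x ∧ ∀ m < j₀, ¬ dval (m + 2) k < x :=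
    ⟨Nat.find hPex, Nat.find_spec hPex, fun m hm => Nat.find_min hPex hm⟩
  rcases Nat.eq_zero_or_pos j₀ with hz | hpos
  · -- r* = 2 : x is close to 1 - 1/k
    refine ⟨2, k, le_rfl, hk, ?_⟩
    rw [hz] at hspec
    norm_num at hspec
    rw [dval_two _ hk, abs_of_nonpos (by rw [dval_two _ hk] at hspec; linarith)]
    have : x - (1 - 1/(k:ℝ)) ≤ 1/(k:ℝ) := by linarith
    linarith [hkinv, hε]
  · -- r* ≥ 3
    obtain ⟨j, hjeq⟩ : ∃ j, j₀ = j + 1 := ⟨j₀ - 1, by omega⟩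
    rw [hjeq] at hspec
    have hmin : ¬ dval (j + 2) k < x := hmin' j (by omega)
    push_neg at hmin
    set R : ℕ := j + 2 with hRdef
    -- R ≤ k
    have hRk : R ≤ k := by
      by_contra hcon
      push_neg at hcon
      rw [dval_eq_zero _ _ hk hcon] at hmin
      linarith
    -- gap bound
    have hgap : x - dval (R + 1) k ≤ (R : ℝ) / (k : ℝ) := by
      have hsucc := dval_succ R k hk
      have hcast : ((k - R : ℕ) : ℝ) = (k : ℝ) - R := Nat.cast_sub hRk
      have hd1 : dval R k ≤ 1 := dval_le_one _ _ hk
      have hd0 : 0 ≤ dval R k := dval_nonneg _ _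
      have : dval R k - dval (R + 1) k = dval R k * ((R : ℝ) / (k : ℝ)) := by
        rw [hsucc, hcast]
        field_simp
        ring
      have hR0 : (0:ℝ) ≤ (R:ℝ)/(k:ℝ) := by positivity
      nlinarith [hmin, this, hd1, hd0, hR0]
    -- bound on R via exponential
    have hexp : x ≤ Real.exp (-(((R:ℝ)^2 - R) / 2) / (k : ℝ)) := by
      have := dval_le_exp R k hk
      rw [sum_range_cast] at this
      exact le_trans hmin this
    have hlogx : Real.log x ≤ -(((R:ℝ)^2 - R) / 2) / (k : ℝ) := by
      calc Real.log x ≤ Real.log (Real.exp (-(((R:ℝ)^2 - R) / 2) / (k : ℝ))) :=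
            Real.log_le_log hxpos hexp
        _ = _ := Real.log_exp _
    have hlogL : -Real.log x ≤ L := by
      have h1 : 1 / x ≤ 2 / ε := by
        rw [div_le_div_iff₀ hxpos hε]
        nlinarith [hsm]
      have h2 : Real.log (1 / x) ≤ Real.log (2 / ε) := Real.log_le_log (by positivity) h1
      rw [Real.log_div one_ne_zero (ne_of_gt hxpos), Real.log_one] at h2
      have := le_max_left (Real.log (2 / ε)) 0
      linarith
    have hS : ((R:ℝ)^2 - R) / 2 ≤ (k : ℝ) * L := by
      rw [le_div_iff₀ hkR] at hlogx
      have h2 : ((R:ℝ)^2 - R) / 2 ≤ (k:ℝ) * (-Real.log x) := by linarith [hlogx]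
      have h3 : (k:ℝ) * (-Real.log x) ≤ (k:ℝ) * L :=
        mul_le_mul_of_nonneg_left hlogL (le_of_lt hkR)
      linarith
    -- conclude R/k < ε
    have hRb : (R : ℝ) - 1 ≤ ε * (k : ℝ) / 2 := by
      have hR2 : (2:ℝ) ≤ (R:ℝ) := by exact_mod_cast (by omega : 2 ≤ R)
      have hsq : ((R:ℝ) - 1)^2 ≤ 2 * (k:ℝ) * L := by nlinarith [hS, hR2]
      have h1 : ((R:ℝ) - 1) = Real.sqrt (((R:ℝ) - 1)^2) :=
        (Real.sqrt_sq (by linarith)).symm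
      have h2 : Real.sqrt (((R:ℝ) - 1)^2) ≤ Real.sqrt (2 * (k:ℝ) * L) :=
        Real.sqrt_le_sqrt hsq
      have h3 : 2 * (k:ℝ) * L ≤ (ε * (k:ℝ) / 2)^2 := by
        nlinarith [mul_le_mul_of_nonneg_left hkL (le_of_lt hkR), hkR, hL0]
      have h4 : Real.sqrt (2 * (k:ℝ) * L) ≤ ε * (k:ℝ) / 2 := by
        rw [show (ε * (k:ℝ) / 2) = Real.sqrt ((ε * (k:ℝ) / 2)^2) from
          (Real.sqrt_sq (by positivity)).symm]
        exact Real.sqrt_le_sqrt h3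
      linarith
    have hRkb : (R : ℝ) / (k : ℝ) < ε := by
      rw [div_lt_iff₀ hkR]
      have : 1/(k:ℝ) < ε/2 := hkinv
      rw [div_lt_div_iff₀ hkR (by norm_num : (0:ℝ) < 2)] at this
      nlinarith [hRb, this]
    refine ⟨R + 1, k, by omega, hk, ?_⟩
    rw [abs_of_nonpos (by linarith [hspec])]
    have : dval (R+1) k = dval (j + 2 + 1) k := rfl
    linarith [hgap, hRkb]

lemma exNum_le_choose (r : ℕ) (𝓕 : Set (RGraph r)) (n : ℕ) :
    exNum r 𝓕 n ≤ n.choose r := by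
  unfold exNum
  set S : Set ℕ := {c : ℕ | ∃ G : RGraph r, G.n = n ∧ RGraph.Free 𝓕 G ∧ G.edges.card = c}
  rcases Set.eq_empty_or_nonempty S with hS | hS
  · rw [hS, csSup_empty]
    exact Nat.zero_le _
  refine csSup_le hS ?_
  rintro c ⟨G, hGn, -, hGc⟩
  have hsub : G.edges ⊆ (Finset.univ : Finset (Fin G.n)).powersetCard r := by
    intro e he
    exact Finset.mem_powersetCard.2 ⟨Finset.subset_univ _, G.card_eq e he⟩
  have := Finset.card_le_card hsub
  rw [Finset.card_powersetCard, Finset.card_univ, Fintype.card_fin] at this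
  rw [← hGc, ← hGn]
  exact this

lemma turan_sub_Icc (r : ℕ) : turanDensities r ⊆ Set.Icc (0:ℝ) 1 := by
  rintro x ⟨𝓕, hx⟩
  constructor
  · refine ge_of_tendsto' hx fun n => ?_
    positivity
  · refine le_of_tendsto' hx fun n => ?_
    rcases Nat.eq_zero_or_pos (n.choose r) with h0 | hpos
    · rw [h0]
      norm_num
    · rw [div_le_one (by exact_mod_cast hpos)]
      exact_mod_cast exNum_le_choose r 𝓕 n

end TuranAux

/-- The union over all `r ≥ 2` of the sets of `r`-graph Turán densities is dense in
`[0,1]`: its topological closure equals `[0,1]`. -/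
theorem stmt3 :
    closure (⋃ r ∈ {r : ℕ | 2 ≤ r}, turanDensities r) = Set.Icc (0 : ℝ) 1 := by

  apply subset_antisymm
  · refine closure_minimal ?_ isClosed_Icc
    refine Set.iUnion₂_subset fun r _ => turan_sub_Icc r
  · intro x hx
    rw [Metric.mem_closure_iff]
    intro ε hε
    obtain ⟨r, k, hr, hk, hclose⟩ := dval_dense x hx ε hε
    refine ⟨dval r k, ?_, ?_⟩
    · exact Set.mem_biUnion hr (dval_mem r k hk hr)
    · rw [Real.dist_eq, abs_sub_comm]
      exact hclose
end

section
/- Let r ≥ 2 and m ≥ r be integers, let G be an r-graph on [m], and let G' = G ∪ {e} be obtained from G by adding one new edge e. If Λ_{G'} − Λ_G = r!/r^r, then Λ_G = 0 (i.e., G has no edges), and moreover any point x of the standard simplex maximizing λ_{G'} satisfies x_u = 1/r for every u ∈ e. -/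
/-- The Lagrange polynomial `λ_G(x) = r! · Σ_{e ∈ G} Π_{i ∈ e} x_i` of an `r`-graph `G`
on the vertex set `[m]`. -/
noncomputable def lagrangePoly (r m : ℕ) (G : Finset (Finset (Fin m))) (x : Fin m → ℝ) : ℝ :=
  (r.factorial : ℝ) * ∑ e ∈ G, ∏ i ∈ e, x i

/-- The Lagrangian `Λ_G`: the maximum of `λ_G` over the standard simplex. -/
noncomputable def lagrangian (r m : ℕ) (G : Finset (Finset (Fin m))) : ℝ :=
  sSup (lagrangePoly r m G '' stdSimplex ℝ (Fin m))

lemma lp_cont (r m : ℕ) (G : Finset (Finset (Fin m))) : Continuous (lagrangePoly r m G) := by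
  unfold lagrangePoly
  exact continuous_const.mul (continuous_finset_sum _ fun e _ =>
    continuous_finset_prod _ fun i _ => continuous_apply i)

lemma exists_max (r m : ℕ) (hm : 0 < m) (G : Finset (Finset (Fin m))) :
    ∃ x ∈ stdSimplex ℝ (Fin m), lagrangePoly r m G x = lagrangian r m G ∧
      ∀ y ∈ stdSimplex ℝ (Fin m), lagrangePoly r m G y ≤ lagrangePoly r m G x := by
  have hne : (stdSimplex ℝ (Fin m)).Nonempty := ⟨_, single_mem_stdSimplex ℝ ⟨0, hm⟩⟩
  obtain ⟨x, hxS, hmax⟩ := (isCompact_stdSimplex ℝ (Fin m)).exists_isMaxOn hne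
    (lp_cont r m G).continuousOn
  refine ⟨x, hxS, ?_, fun y hy => hmax hy⟩
  have : IsGreatest (lagrangePoly r m G '' stdSimplex ℝ (Fin m)) (lagrangePoly r m G x) :=
    ⟨⟨x, hxS, rfl⟩, by rintro _ ⟨y, hy, rfl⟩; exact hmax hy⟩
  exact (this.csSup_eq).symm

lemma le_lagrangian (r m : ℕ) (hm : 0 < m) (G : Finset (Finset (Fin m)))
    {y : Fin m → ℝ} (hy : y ∈ stdSimplex ℝ (Fin m)) :
    lagrangePoly r m G y ≤ lagrangian r m G := by
  obtain ⟨x, hxS, hx, hmax⟩ := exists_max r m hm G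
  exact hx ▸ hmax y hy

lemma amgm_le {ι : Type*} (e : Finset ι) (r : ℕ) (he : e.card = r) (hr : 0 < r)
    (x : ι → ℝ) (hx : ∀ i ∈ e, 0 ≤ x i) (hs : ∑ i ∈ e, x i ≤ 1) :
    ∏ i ∈ e, x i ≤ (1 / (r : ℝ)) ^ r := by
  have hr' : (0 : ℝ) < r := by exact_mod_cast hr
  have hw' : ∑ _i ∈ e, (1 / (r : ℝ)) = 1 := by
    rw [Finset.sum_const, he, nsmul_eq_mul]; field_simp
  have h := Real.geom_mean_le_arith_mean_weighted e (fun _ => 1 / (r : ℝ)) x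
    (fun i _ => by positivity) hw' hx
  have h2 : ∑ i ∈ e, (1 / (r : ℝ)) * x i ≤ 1 / (r : ℝ) := by
    rw [← Finset.mul_sum, div_mul_eq_mul_div, one_mul]
    gcongr
  have hG : ∏ i ∈ e, x i ^ (1 / (r : ℝ)) ≤ 1 / (r : ℝ) := h.trans h2
  have hGnn : 0 ≤ ∏ i ∈ e, x i ^ (1 / (r : ℝ)) :=
    Finset.prod_nonneg fun i hi => Real.rpow_nonneg (hx i hi) _
  have hkey : ∏ i ∈ e, x i = (∏ i ∈ e, x i ^ (1 / (r : ℝ))) ^ r := by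
    rw [← Finset.prod_pow]
    refine (Finset.prod_congr rfl fun i hi => ?_).symm
    rw [← Real.rpow_natCast (x i ^ (1 / (r:ℝ))) r, ← Real.rpow_mul (hx i hi),
      one_div, inv_mul_cancel₀ (ne_of_gt hr'), Real.rpow_one]
  rw [hkey]
  exact pow_le_pow_left₀ hGnn hG r

lemma amgm_eq {ι : Type*} [DecidableEq ι] (e : Finset ι) (r : ℕ) (he : e.card = r) (hr : 0 < r)
    (x : ι → ℝ) (hx : ∀ i ∈ e, 0 ≤ x i) (hs : ∑ i ∈ e, x i ≤ 1)
    (hp : ∏ i ∈ e, x i = (1 / (r : ℝ)) ^ r) :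
    ∀ u ∈ e, x u = 1 / (r : ℝ) := by
  have hr' : (0 : ℝ) < r := by exact_mod_cast hr
  have hppos : (0 : ℝ) < (1 / (r : ℝ)) ^ r := by positivity
  have hxpos : ∀ i ∈ e, 0 < x i := by
    intro i hi
    rcases (hx i hi).lt_or_eq with h | h
    · exact h
    · exfalso
      rw [Finset.prod_eq_zero hi h.symm] at hp
      exact hppos.ne (hp ▸ rfl)
  -- Step 1: sum = 1
  have hsum1 : ∑ i ∈ e, x i = 1 := by
    by_contra hne
    have hslt : ∑ i ∈ e, x i < 1 := lt_of_le_of_ne hs hne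
    have hene : e.Nonempty := Finset.card_pos.mp (he ▸ hr)
    obtain ⟨i0, hi0⟩ := hene
    have hspos : 0 < ∑ i ∈ e, x i :=
      lt_of_lt_of_le (hxpos i0 hi0) (Finset.single_le_sum (fun i hi => hx i hi) hi0)
    set s := ∑ i ∈ e, x i with hsdef
    have h1 : ∑ i ∈ e, x i / s = 1 := by
      rw [← Finset.sum_div, div_self hspos.ne']
    have h2 := amgm_le e r he hr (fun i => x i / s)
      (fun i hi => div_nonneg (hx i hi) hspos.le) (le_of_eq h1)
    have h3 : ∏ i ∈ e, x i / s = (1 / (r:ℝ))^r / s ^ r := by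
      rw [Finset.prod_div_distrib, hp, Finset.prod_const, he]
    rw [h3, div_le_iff₀ (by positivity)] at h2
    nlinarith [pow_lt_one₀ hspos.le hslt hr.ne', hppos]
  -- Step 2: all coordinates on e are equal
  have hall : ∀ a ∈ e, ∀ b ∈ e, x a = x b := by
    intro a ha b hb
    by_contra hab
    have hne : a ≠ b := fun h => hab (h ▸ rfl)
    set c := (x a + x b) / 2 with hc
    set y := Function.update (Function.update x a c) b c with hy
    have hab' : a ∈ e \ {b} := Finset.mem_sdiff.mpr ⟨ha, by simp [hne]⟩
    have hsd : (e \ {b}) \ {a} = (e \ {a}) \ {b} := sdiff_sdiff_comm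
    have hba' : b ∈ e \ {a} := Finset.mem_sdiff.mpr ⟨hb, by simp [hne.symm]⟩
    have hxsplit : ∑ i ∈ e, x i = ∑ i ∈ (e \ {a}) \ {b}, x i + x b + x a :=
      by rw [Finset.sum_eq_sum_sdiff_singleton_add ha x,
        Finset.sum_eq_sum_sdiff_singleton_add hba' x]
    have hys : ∑ i ∈ e, y i = 1 := by
      rw [hy, Finset.sum_update_of_mem hb, Finset.sum_update_of_mem hab', hsd]
      rw [hxsplit] at hsum1
      rw [hc]; linarith
    have hynn : ∀ i ∈ e, 0 ≤ y i := by
      intro i hi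
      rw [hy]
      rcases eq_or_ne i b with rfl | hib
      · simp [hc]; linarith [hx _ ha, hx _ hb]
      rcases eq_or_ne i a with rfl | hia
      · simp [Function.update_of_ne hib, hc]; linarith [hx _ ha, hx _ hb]
      · simp [Function.update_of_ne hib, Function.update_of_ne hia]; exact hx i hi
    have hyle := amgm_le e r he hr y hynn (le_of_eq hys)
    have hysplit : ∏ i ∈ e, y i = c * c * ∏ i ∈ (e \ {a}) \ {b}, x i := by
      rw [hy, Finset.prod_update_of_mem hb, Finset.prod_update_of_mem hab', hsd]
      ring
    have hxsplitp : ∏ i ∈ e, x i = x a * x b * ∏ i ∈ (e \ {a}) \ {b}, x i := by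
      rw [Finset.prod_eq_prod_sdiff_singleton_mul ha x,
        Finset.prod_eq_prod_sdiff_singleton_mul hba' x]
      ring
    have hPpos : 0 < ∏ i ∈ (e \ {a}) \ {b}, x i := by
      apply Finset.prod_pos
      intro i hi
      exact hxpos i (Finset.mem_sdiff.mp (Finset.mem_sdiff.mp hi).1).1
    have hc2 : x a * x b < c * c := by
      have h0 : (0:ℝ) < (x a - x b)^2 := by
        have := sub_ne_zero.mpr hab
        positivity
      rw [hc]; nlinarith [h0]
    rw [hysplit] at hyle
    rw [hxsplitp] at hp
    have := mul_lt_mul_of_pos_right hc2 hPpos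
    linarith
  intro u hu
  have h1 : ∑ i ∈ e, x i = (e.card : ℝ) * x u := by
    rw [Finset.sum_congr rfl (fun i hi => hall i hi u hu), Finset.sum_const, nsmul_eq_mul]
  rw [hsum1, he] at h1
  field_simp
  linarith [h1]

/-- If adding a single edge `e` to an `r`-graph `G` increases the Lagrangian by exactly
`r!/r^r`, then `Λ_G = 0` (i.e. `G` has no edges), and every point of the standard simplex
maximizing `λ_{G ∪ {e}}` has all coordinates on `e` equal to `1/r`. -/
theorem stmt5 (r m : ℕ) (hr : 2 ≤ r) (hm : r ≤ m)
    (G : Finset (Finset (Fin m))) (hG : ∀ f ∈ G, f.card = r)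
    (e : Finset (Fin m)) (he : e.card = r) (heG : e ∉ G)
    (heq : lagrangian r m (insert e G) - lagrangian r m G = (r.factorial : ℝ) / (r : ℝ) ^ r) :
    lagrangian r m G = 0 ∧ G = ∅ ∧
      ∀ x ∈ stdSimplex ℝ (Fin m),
        lagrangePoly r m (insert e G) x = lagrangian r m (insert e G) →
        ∀ u ∈ e, x u = 1 / (r : ℝ) := by
  have hr0 : 0 < r := by omega
  have hm0 : 0 < m := by omega
  have hrR : (0:ℝ) < r := by exact_mod_cast hr0
  have hfac : (0:ℝ) < r.factorial := by exact_mod_cast r.factorial_pos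
  have hC : (r.factorial : ℝ) * (1/(r:ℝ))^r = (r.factorial:ℝ)/(r:ℝ)^r := by
    rw [one_div, inv_pow, ← div_eq_mul_inv]
  have key : ∀ x ∈ stdSimplex ℝ (Fin m),
      lagrangePoly r m (insert e G) x = lagrangian r m (insert e G) →
      (∀ u ∈ e, x u = 1/(r:ℝ)) ∧ lagrangePoly r m G x = lagrangian r m G := by
    intro x hxS hxmax
    have hnn : ∀ i, 0 ≤ x i := hxS.1
    have hsum : ∑ i, x i = 1 := hxS.2
    have hse : ∑ i ∈ e, x i ≤ 1 := by
      rw [← hsum]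
      exact Finset.sum_le_sum_of_subset_of_nonneg (Finset.subset_univ e) fun i _ _ => hnn i
    have hsplit : lagrangePoly r m (insert e G) x
        = (r.factorial:ℝ) * ∏ i ∈ e, x i + lagrangePoly r m G x := by
      unfold lagrangePoly; rw [Finset.sum_insert heG]; ring
    have h1 : lagrangePoly r m G x ≤ lagrangian r m G := le_lagrangian r m hm0 G hxS
    have h2 : ∏ i ∈ e, x i ≤ (1/(r:ℝ))^r := amgm_le e r he hr0 x (fun i _ => hnn i) hse
    have h3 : (r.factorial:ℝ) * ∏ i ∈ e, x i ≤ (r.factorial:ℝ) * (1/(r:ℝ))^r :=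
      mul_le_mul_of_nonneg_left h2 hfac.le
    have hFP : (r.factorial:ℝ) * ∏ i ∈ e, x i = (r.factorial:ℝ) * (1/(r:ℝ))^r := by
      linarith
    have hP : ∏ i ∈ e, x i = (1/(r:ℝ))^r := mul_left_cancel₀ hfac.ne' hFP
    exact ⟨amgm_eq e r he hr0 x (fun i _ => hnn i) hse hP, by linarith⟩
  obtain ⟨x0, hx0S, hx0eq, _⟩ := exists_max r m hm0 (insert e G)
  obtain ⟨hu0, hA0⟩ := key x0 hx0S hx0eq
  have hse1 : ∑ i ∈ e, x0 i = 1 := by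
    rw [Finset.sum_congr rfl (fun i hi => hu0 i hi), Finset.sum_const, he, nsmul_eq_mul]
    field_simp
  have hsupp : ∀ j, j ∉ e → x0 j = 0 := by
    have hz : ∑ i ∈ Finset.univ \ e, x0 i = 0 := by
      rw [Finset.sum_sdiff_eq_sub (Finset.subset_univ e), hx0S.2, hse1, sub_self]
    intro j hj
    exact (Finset.sum_eq_zero_iff_of_nonneg fun i _ => hx0S.1 i).mp hz j (by simp [hj])
  have hL0 : lagrangian r m G = 0 := by
    rw [← hA0]
    unfold lagrangePoly
    have hzero : ∀ f ∈ G, ∏ i ∈ f, x0 i = 0 := by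
      intro f hf
      have hfe : f ≠ e := fun h => heG (h ▸ hf)
      have hns : ¬ f ⊆ e := fun hsub =>
        hfe (Finset.eq_of_subset_of_card_le hsub (by rw [he, hG f hf]))
      obtain ⟨i, hif, hie⟩ := Finset.not_subset.mp hns
      exact Finset.prod_eq_zero hif (hsupp i hie)
    rw [Finset.sum_eq_zero hzero, mul_zero]
  have hGempty : G = ∅ := by
    by_contra hne
    obtain ⟨f, hf⟩ := Finset.nonempty_iff_ne_empty.mpr hne
    set y : Fin m → ℝ := fun i => if i ∈ f then 1/(r:ℝ) else 0 with hy
    have hyS : y ∈ stdSimplex ℝ (Fin m) := by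
      constructor
      · intro i; dsimp [y]; split <;> positivity
      · rw [hy]
        rw [Finset.sum_ite_mem, Finset.univ_inter, Finset.sum_const, hG f hf, nsmul_eq_mul]
        field_simp
    have hprodf : ∏ i ∈ f, y i = (1/(r:ℝ))^r := by
      rw [Finset.prod_congr rfl (fun i hi => if_pos hi), Finset.prod_const, hG f hf]
    have hge : (r.factorial:ℝ) * (1/(r:ℝ))^r ≤ lagrangePoly r m G y := by
      unfold lagrangePoly
      apply mul_le_mul_of_nonneg_left ?_ hfac.le
      rw [← hprodf]
      refine Finset.single_le_sum (f := fun f' => ∏ i ∈ f', y i) (fun f' _ => ?_) hf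
      refine Finset.prod_nonneg fun i _ => ?_
      dsimp [y]; split <;> positivity
    have hle := le_lagrangian r m hm0 G hyS
    rw [hL0] at hle
    nlinarith [pow_pos (by positivity : (0:ℝ) < 1/(r:ℝ)) r]
  exact ⟨hL0, hGempty, fun x hxS hxmax => (key x hxS hxmax).1⟩
end
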